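/- arXiv:1912.06951 — 12 statements merged into one kernel-verified Lean document; each statement's English description precedes it below -/
import Mathlib

section
/- Let K be a field of characteristic zero, let n ≥ 1 be an integer, let λ ∈ K be nonzero, and let X₀, X₁, …, X_n ∈ K all be nonzero and satisfy the Dwork pencil equation X₀^{n+1} + X₁^{n+1} + ⋯ + X_n^{n+1} + (n+1)·λ·X₀X₁⋯X_n = 0. Define μ = (−1)^{n+1}/λ^{n+1} and, for i = 1, …, n, define x_i = X_i^n / ((n+1)·λ·∏_{0 ≤ j ≤ n, j ≠ i} X_j). Then x₁⋯x_n·(x₁ + ⋯ + x_n + 1) + (−1)^{n+1}·μ/(n+1)^{n+1} = 0. -/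
/-- Orbifold-invariant coordinates on the Dwork pencil satisfy the
mirror family equation. -/
theorem dwork_pencil_mirror_equation (K : Type*) [Field K] [CharZero K]
    (n : ℕ) (hn : 1 ≤ n) (lam : K) (hlam : lam ≠ 0)
    (X : Fin (n + 1) → K) (hX : ∀ i, X i ≠ 0)
    (hDwork : ∑ i, X i ^ (n + 1) + (n + 1 : K) * lam * ∏ i, X i = 0)
    (μ : K) (hμ : μ = (-1 : K) ^ (n + 1) / lam ^ (n + 1))
    (x : Fin n → K)
    (hx : ∀ i : Fin n, x i = X i.succ ^ n /
      ((n + 1 : K) * lam * ∏ j ∈ Finset.univ.erase i.succ, X j)) :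
    (∏ i, x i) * ((∑ i, x i) + 1) + (-1 : K) ^ (n + 1) * μ / (n + 1 : K) ^ (n + 1) = 0 := by
  have hn1 : (n + 1 : K) ≠ 0 := by exact_mod_cast Nat.succ_ne_zero n
  set c : K := (n + 1 : K) * lam with hc
  have hc0 : c ≠ 0 := mul_ne_zero hn1 hlam
  set P : K := ∏ i, X i with hP
  have hP0 : P ≠ 0 := Finset.prod_ne_zero_iff.mpr fun i _ => hX i
  -- rewrite x i with a common denominator
  have hx' : ∀ i : Fin n, x i = X i.succ ^ (n + 1) / (c * P) := by
    intro i
    have hE : X i.succ * ∏ j ∈ Finset.univ.erase i.succ, X j = P :=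
      Finset.mul_prod_erase _ _ (Finset.mem_univ _)
    rw [hx i, ← hE, pow_succ',
      show c * (X i.succ * ∏ j ∈ Finset.univ.erase i.succ, X j)
          = X i.succ * (c * ∏ j ∈ Finset.univ.erase i.succ, X j) from by ring,
      mul_div_mul_left _ _ (hX i.succ)]
  set Q : K := ∏ i : Fin n, X i.succ with hQ
  set S : K := ∑ i : Fin n, X i.succ ^ (n + 1) with hS
  have hPQ : P = X 0 * Q := by rw [hP, Fin.prod_univ_succ]
  have hQ0 : Q ≠ 0 := Finset.prod_ne_zero_iff.mpr fun i _ => hX _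
  have hD : X 0 ^ (n + 1) + S + c * P = 0 := by
    rw [Fin.sum_univ_succ] at hDwork
    linear_combination hDwork
  have hsum : (∑ i, x i) + 1 = -X 0 ^ (n + 1) / (c * P) := by
    have h1 : ∑ i, x i = S / (c * P) := by
      simp only [hx']
      rw [hS, Finset.sum_div]
    rw [h1]
    field_simp
    linear_combination hD
  have hprod : ∏ i, x i = Q ^ (n + 1) / (c * P) ^ n := by
    simp only [hx']
    rw [Finset.prod_div_distrib, Finset.prod_pow, Finset.prod_const, Finset.card_univ,
      Fintype.card_fin, hQ]
  have hX0 : X 0 ≠ 0 := hX 0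
  have hm1 : (-1 : K) ^ (n + 1) * (-1 : K) ^ (n + 1) = 1 := by
    rw [← mul_pow]; norm_num
  have hA0 : X 0 * Q ≠ 0 := mul_ne_zero hX0 hQ0
  have key1 : Q ^ (n + 1) / (c * P) ^ n * (-X 0 ^ (n + 1) / (c * P)) = -(c ^ (n + 1))⁻¹ := by
    rw [hPQ, div_mul_div_comm, ← pow_succ, mul_pow c (X 0 * Q) (n + 1),
      div_eq_iff (mul_ne_zero (pow_ne_zero _ hc0) (pow_ne_zero _ hA0)),
      show -(c ^ (n + 1))⁻¹ * (c ^ (n + 1) * (X 0 * Q) ^ (n + 1))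
          = -((X 0 * Q) ^ (n + 1)) from by field_simp,
      mul_pow]
    ring
  have h2 : (-1 : K) ^ (n * 2) = 1 := by rw [mul_comm, pow_mul]; norm_num
  have key2 : (-1 : K) ^ (n + 1) * μ / (n + 1 : K) ^ (n + 1) = (c ^ (n + 1))⁻¹ := by
    rw [hμ, hc, mul_pow]
    rw [eq_comm, inv_eq_iff_eq_inv, eq_comm]
    field_simp
    ring_nf
    simp only [h2]
  rw [hprod, hsum, key1, key2, neg_add_cancel]
end

section
/- Let λ, u, X, Y ∈ ℂ with λ ≠ 0 and u ≠ 0, and assume 16u³λ² − 3iYλ² + 12Xuλ² + 4u⁴ + 4u² ≠ 0 and 4u²λ² + 3Xλ² + u³ − 2u ≠ 0, where i is the imaginary unit. Define x₁ = −(4u²λ² + 3Xλ² + u³ + u)(4u²λ² + 3Xλ² + u³ − 2u) / (6λ²u(16u³λ² − 3iYλ² + 12Xuλ² + 4u⁴ + 4u²)), x₂ = −(16u³λ² − 3iYλ² + 12Xuλ² + 4u⁴ + 4u²) / (8u(4u²λ² + 3Xλ² + u³ − 2u)), and x₃ = u²(4u²λ² + 3Xλ² + u³ − 2u) / (2λ²(16u³λ²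 − 3iYλ² + 12Xuλ² + 4u⁴ + 4u²)). If Y² = 4X³ − g₂(u)X − g₃(u), where g₂(u) = (4/(3λ⁴))·u²·(u⁴ + 8λ²u³ + (4λ²−1)(4λ²+1)u² + 8λ²u + 1) and g₃(u) = (4/(27λ⁶))·u³·(u² + 4λ²u + 1)·(2u⁴ + 16λ²u³ + (32λ⁴−5)u² + 16λ²u + 2), then x₁x₂x₃(x₁ + x₂ + x₃ + 1) + 1/(256λ⁴) = 0. -/
set_option maxHeartbeats 1600000 in
/-- The Narumiya–Shiga substitution transforms the Weierstrass equation
of the mirror-quartic family into the mirror-quartic equation. -/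
theorem mirror_quartic_weierstrass_substitution (lam u X Y : ℂ)
    (hlam : lam ≠ 0) (hu : u ≠ 0)
    (hD1 : 16 * u ^ 3 * lam ^ 2 - 3 * Complex.I * Y * lam ^ 2 + 12 * X * u * lam ^ 2
      + 4 * u ^ 4 + 4 * u ^ 2 ≠ 0)
    (hD2 : 4 * u ^ 2 * lam ^ 2 + 3 * X * lam ^ 2 + u ^ 3 - 2 * u ≠ 0)
    (x₁ x₂ x₃ : ℂ)
    (hx₁ : x₁ = -((4 * u ^ 2 * lam ^ 2 + 3 * X * lam ^ 2 + u ^ 3 + u)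
        * (4 * u ^ 2 * lam ^ 2 + 3 * X * lam ^ 2 + u ^ 3 - 2 * u)) /
      (6 * lam ^ 2 * u * (16 * u ^ 3 * lam ^ 2 - 3 * Complex.I * Y * lam ^ 2
        + 12 * X * u * lam ^ 2 + 4 * u ^ 4 + 4 * u ^ 2)))
    (hx₂ : x₂ = -(16 * u ^ 3 * lam ^ 2 - 3 * Complex.I * Y * lam ^ 2
        + 12 * X * u * lam ^ 2 + 4 * u ^ 4 + 4 * u ^ 2) /
      (8 * u * (4 * u ^ 2 * lam ^ 2 + 3 * X * lam ^ 2 + u ^ 3 - 2 * u)))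
    (hx₃ : x₃ = u ^ 2 * (4 * u ^ 2 * lam ^ 2 + 3 * X * lam ^ 2 + u ^ 3 - 2 * u) /
      (2 * lam ^ 2 * (16 * u ^ 3 * lam ^ 2 - 3 * Complex.I * Y * lam ^ 2
        + 12 * X * u * lam ^ 2 + 4 * u ^ 4 + 4 * u ^ 2)))
    (hW : Y ^ 2 = 4 * X ^ 3
      - (4 / (3 * lam ^ 4) * u ^ 2 * (u ^ 4 + 8 * lam ^ 2 * u ^ 3
          + (4 * lam ^ 2 - 1) * (4 * lam ^ 2 + 1) * u ^ 2 + 8 * lam ^ 2 * u + 1)) * X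
      - (4 / (27 * lam ^ 6) * u ^ 3 * (u ^ 2 + 4 * lam ^ 2 * u + 1)
          * (2 * u ^ 4 + 16 * lam ^ 2 * u ^ 3 + (32 * lam ^ 4 - 5) * u ^ 2
            + 16 * lam ^ 2 * u + 2))) :
    x₁ * x₂ * x₃ * (x₁ + x₂ + x₃ + 1) + 1 / (256 * lam ^ 4) = 0 := by
  have hI : Complex.I ^ 2 = -1 := Complex.I_sq
  have hW' : 27 * lam ^ 6 * Y ^ 2 = 108 * lam ^ 6 * X ^ 3
      - 36 * lam ^ 2 * u ^ 2 * (u ^ 4 + 8 * lam ^ 2 * u ^ 3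
          + (4 * lam ^ 2 - 1) * (4 * lam ^ 2 + 1) * u ^ 2 + 8 * lam ^ 2 * u + 1) * X
      - 4 * u ^ 3 * (u ^ 2 + 4 * lam ^ 2 * u + 1)
          * (2 * u ^ 4 + 16 * lam ^ 2 * u ^ 3 + (32 * lam ^ 4 - 5) * u ^ 2
            + 16 * lam ^ 2 * u + 2) := by
    rw [hW]; field_simp; ring
  have key : (-4 * (4 * u ^ 2 * lam ^ 2 + 3 * X * lam ^ 2 + u ^ 3 + u) ^ 2 * (4 * u ^ 2 * lam ^ 2 + 3 * X * lam ^ 2 + u ^ 3 - 2 * u) + 12 * u ^ 3 * (4 * u ^ 2 * lam ^ 2 + 3 * X * lam ^ 2 + u ^ 3 + u) * (4 * u ^ 2 * lam ^ 2 + 3 * X * lam ^ 2 + u ^ 3 - 2 * u) + 24 * lam ^ 2 * u * (16 * u ^ 3 * lam ^ 2 - 3 * Complex.I * Y * lam ^ 2 + 12 * X * u * lam ^ 2 + 4 * u ^ 4 + 4 * u ^ 2) * (4 * u ^ 2 * lam ^ 2 + 3 * X * lam ^ 2 + u ^ 3 + u) - 3 * lam ^ 2 * (16 * u ^ 3 *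 lam ^ 2 - 3 * Complex.I * Y * lam ^ 2 + 12 * X * u * lam ^ 2 + 4 * u ^ 4 + 4 * u ^ 2) ^ 2) = 0 := by
    linear_combination hW' + (-27 * lam ^ 6 * Y ^ 2) * hI
  have hlam2 : lam ^ 2 ≠ 0 := pow_ne_zero _ hlam
  have h6 : 6 * lam ^ 2 * u * (16 * u ^ 3 * lam ^ 2 - 3 * Complex.I * Y * lam ^ 2 + 12 * X * u * lam ^ 2 + 4 * u ^ 4 + 4 * u ^ 2) ≠ 0 :=
    mul_ne_zero (mul_ne_zero (mul_ne_zero (by norm_num) hlam2) hu) hD1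
  have h8 : 8 * u * (4 * u ^ 2 * lam ^ 2 + 3 * X * lam ^ 2 + u ^ 3 - 2 * u) ≠ 0 := mul_ne_zero (mul_ne_zero (by norm_num) hu) hD2
  have h2 : 2 * lam ^ 2 * (16 * u ^ 3 * lam ^ 2 - 3 * Complex.I * Y * lam ^ 2 + 12 * X * u * lam ^ 2 + 4 * u ^ 4 + 4 * u ^ 2) ≠ 0 := mul_ne_zero (mul_ne_zero (by norm_num) hlam2) hD1
  have h16 : (16 : ℂ) * lam ^ 2 ≠ 0 := mul_ne_zero (by norm_num) hlam2
  have h96 : 96 * lam ^ 4 * (16 * u ^ 3 * lam ^ 2 - 3 * Complex.I * Y * lam ^ 2 + 12 * X * u * lam ^ 2 + 4 * u ^ 4 + 4 * u ^ 2) ≠ 0 :=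
    mul_ne_zero (mul_ne_zero (by norm_num) (pow_ne_zero _ hlam)) hD1
  have hM : (2304 * lam ^ 6 * u * (16 * u ^ 3 * lam ^ 2 - 3 * Complex.I * Y * lam ^ 2 + 12 * X * u * lam ^ 2 + 4 * u ^ 4 + 4 * u ^ 2) ^ 2) ≠ 0 :=
    mul_ne_zero (mul_ne_zero (mul_ne_zero (by norm_num) (pow_ne_zero _ hlam)) hu)
      (pow_ne_zero _ hD1)
  have h256 : (256 : ℂ) * lam ^ 4 ≠ 0 := mul_ne_zero (by norm_num) (pow_ne_zero _ hlam)
  have h23 : x₂ * x₃ = -u / (16 * lam ^ 2) := by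
    rw [hx₂, hx₃, div_mul_div_comm, div_eq_div_iff (mul_ne_zero h8 h2) h16]
    ring
  have h123 : x₁ * (x₂ * x₃) = (4 * u ^ 2 * lam ^ 2 + 3 * X * lam ^ 2 + u ^ 3 + u) * (4 * u ^ 2 * lam ^ 2 + 3 * X * lam ^ 2 + u ^ 3 - 2 * u) / (96 * lam ^ 4 * (16 * u ^ 3 * lam ^ 2 - 3 * Complex.I * Y * lam ^ 2 + 12 * X * u * lam ^ 2 + 4 * u ^ 4 + 4 * u ^ 2)) := by
    rw [h23, hx₁, div_mul_div_comm, div_eq_div_iff (mul_ne_zero h6 h16) h96]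
    ring
  have T1 : x₁ * (x₂ * x₃) * x₁
      = -4 * (4 * u ^ 2 * lam ^ 2 + 3 * X * lam ^ 2 + u ^ 3 + u) ^ 2 * (4 * u ^ 2 * lam ^ 2 + 3 * X * lam ^ 2 + u ^ 3 - 2 * u) ^ 2 / (2304 * lam ^ 6 * u * (16 * u ^ 3 * lam ^ 2 - 3 * Complex.I * Y * lam ^ 2 + 12 * X * u * lam ^ 2 + 4 * u ^ 4 + 4 * u ^ 2) ^ 2) := by
    rw [h123, hx₁, div_mul_div_comm, div_eq_div_iff (mul_ne_zero h96 h6) hM]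
    ring
  have T2 : x₁ * (x₂ * x₃) * x₂
      = -3 * lam ^ 2 * (4 * u ^ 2 * lam ^ 2 + 3 * X * lam ^ 2 + u ^ 3 + u) * (16 * u ^ 3 * lam ^ 2 - 3 * Complex.I * Y * lam ^ 2 + 12 * X * u * lam ^ 2 + 4 * u ^ 4 + 4 * u ^ 2) ^ 2 / (2304 * lam ^ 6 * u * (16 * u ^ 3 * lam ^ 2 - 3 * Complex.I * Y * lam ^ 2 + 12 * X * u * lam ^ 2 + 4 * u ^ 4 + 4 * u ^ 2) ^ 2) := by
    rw [h123, hx₂, div_mul_div_comm, div_eq_div_iff (mul_ne_zero h96 h8) hM]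
    ring
  have T3 : x₁ * (x₂ * x₃) * x₃
      = 12 * u ^ 3 * (4 * u ^ 2 * lam ^ 2 + 3 * X * lam ^ 2 + u ^ 3 + u) * (4 * u ^ 2 * lam ^ 2 + 3 * X * lam ^ 2 + u ^ 3 - 2 * u) ^ 2 / (2304 * lam ^ 6 * u * (16 * u ^ 3 * lam ^ 2 - 3 * Complex.I * Y * lam ^ 2 + 12 * X * u * lam ^ 2 + 4 * u ^ 4 + 4 * u ^ 2) ^ 2) := by
    rw [h123, hx₃, div_mul_div_comm, div_eq_div_iff (mul_ne_zero h96 h2) hM]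
    ring
  have T4 : x₁ * (x₂ * x₃)
      = 24 * lam ^ 2 * u * (16 * u ^ 3 * lam ^ 2 - 3 * Complex.I * Y * lam ^ 2 + 12 * X * u * lam ^ 2 + 4 * u ^ 4 + 4 * u ^ 2) * (4 * u ^ 2 * lam ^ 2 + 3 * X * lam ^ 2 + u ^ 3 + u) * (4 * u ^ 2 * lam ^ 2 + 3 * X * lam ^ 2 + u ^ 3 - 2 * u) / (2304 * lam ^ 6 * u * (16 * u ^ 3 * lam ^ 2 - 3 * Complex.I * Y * lam ^ 2 + 12 * X * u * lam ^ 2 + 4 * u ^ 4 + 4 * u ^ 2) ^ 2) := by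
    rw [h123, div_eq_div_iff h96 hM]
    ring
  have T5 : 1 / (256 * lam ^ 4) = 9 * lam ^ 2 * u * (16 * u ^ 3 * lam ^ 2 - 3 * Complex.I * Y * lam ^ 2 + 12 * X * u * lam ^ 2 + 4 * u ^ 4 + 4 * u ^ 2) ^ 2 / (2304 * lam ^ 6 * u * (16 * u ^ 3 * lam ^ 2 - 3 * Complex.I * Y * lam ^ 2 + 12 * X * u * lam ^ 2 + 4 * u ^ 4 + 4 * u ^ 2) ^ 2) := by
    rw [div_eq_div_iff h256 hM]
    ring
  have hnum : -4 * (4 * u ^ 2 * lam ^ 2 + 3 * X * lam ^ 2 + u ^ 3 + u) ^ 2 * (4 * u ^ 2 * lam ^ 2 + 3 * X * lam ^ 2 + u ^ 3 - 2 * u) ^ 2 / (2304 * lam ^ 6 * u * (16 * u ^ 3 * lam ^ 2 - 3 * Complex.I * Y * lam ^ 2 + 12 * X * u * lam ^ 2 + 4 * u ^ 4 + 4 * u ^ 2) ^ 2)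
      + -3 * lam ^ 2 * (4 * u ^ 2 * lam ^ 2 + 3 * X * lam ^ 2 + u ^ 3 + u) * (16 * u ^ 3 * lam ^ 2 - 3 * Complex.I * Y * lam ^ 2 + 12 * X * u * lam ^ 2 + 4 * u ^ 4 + 4 * u ^ 2) ^ 2 / (2304 * lam ^ 6 * u * (16 * u ^ 3 * lam ^ 2 - 3 * Complex.I * Y * lam ^ 2 + 12 * X * u * lam ^ 2 + 4 * u ^ 4 + 4 * u ^ 2) ^ 2)
      + 12 * u ^ 3 * (4 * u ^ 2 * lam ^ 2 + 3 * X * lam ^ 2 + u ^ 3 + u) * (4 * u ^ 2 * lam ^ 2 + 3 * X * lam ^ 2 + u ^ 3 - 2 * u) ^ 2 / (2304 * lam ^ 6 * u * (16 * u ^ 3 * lam ^ 2 - 3 * Complex.I * Y * lam ^ 2 + 12 * X * u * lam ^ 2 + 4 * u ^ 4 + 4 * u ^ 2) ^ 2)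
      + 24 * lam ^ 2 * u * (16 * u ^ 3 * lam ^ 2 - 3 * Complex.I * Y * lam ^ 2 + 12 * X * u * lam ^ 2 + 4 * u ^ 4 + 4 * u ^ 2) * (4 * u ^ 2 * lam ^ 2 + 3 * X * lam ^ 2 + u ^ 3 + u) * (4 * u ^ 2 * lam ^ 2 + 3 * X * lam ^ 2 + u ^ 3 - 2 * u) / (2304 * lam ^ 6 * u * (16 * u ^ 3 * lam ^ 2 - 3 * Complex.I * Y * lam ^ 2 + 12 * X * u * lam ^ 2 + 4 * u ^ 4 + 4 * u ^ 2) ^ 2)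
      + 9 * lam ^ 2 * u * (16 * u ^ 3 * lam ^ 2 - 3 * Complex.I * Y * lam ^ 2 + 12 * X * u * lam ^ 2 + 4 * u ^ 4 + 4 * u ^ 2) ^ 2 / (2304 * lam ^ 6 * u * (16 * u ^ 3 * lam ^ 2 - 3 * Complex.I * Y * lam ^ 2 + 12 * X * u * lam ^ 2 + 4 * u ^ 4 + 4 * u ^ 2) ^ 2)
      = (4 * u ^ 2 * lam ^ 2 + 3 * X * lam ^ 2 + u ^ 3 - 2 * u) * (-4 * (4 * u ^ 2 * lam ^ 2 + 3 * X * lam ^ 2 + u ^ 3 + u) ^ 2 * (4 * u ^ 2 * lam ^ 2 + 3 * X * lam ^ 2 + u ^ 3 - 2 * u) + 12 * u ^ 3 * (4 * u ^ 2 * lam ^ 2 + 3 * X * lam ^ 2 + u ^ 3 + u) * (4 * u ^ 2 * lam ^ 2 + 3 * X * lam ^ 2 + u ^ 3 - 2 * u) + 24 * lam ^ 2 * u * (16 * u ^ 3 * lam ^ 2 - 3 * Complex.I * Y * lam ^ 2 + 12 * X * u * lam ^ 2 + 4 * u ^ 4 + 4 * u ^ 2) * (4 * u ^ 2 * lam ^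 2 + 3 * X * lam ^ 2 + u ^ 3 + u) - 3 * lam ^ 2 * (16 * u ^ 3 * lam ^ 2 - 3 * Complex.I * Y * lam ^ 2 + 12 * X * u * lam ^ 2 + 4 * u ^ 4 + 4 * u ^ 2) ^ 2) / (2304 * lam ^ 6 * u * (16 * u ^ 3 * lam ^ 2 - 3 * Complex.I * Y * lam ^ 2 + 12 * X * u * lam ^ 2 + 4 * u ^ 4 + 4 * u ^ 2) ^ 2) := by
    rw [← add_div, ← add_div, ← add_div, ← add_div,
      div_eq_div_iff hM hM]
    ring
  calc x₁ * x₂ * x₃ * (x₁ + x₂ + x₃ + 1) + 1 / (256 * lam ^ 4)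
      = x₁ * (x₂ * x₃) * x₁ + x₁ * (x₂ * x₃) * x₂ + x₁ * (x₂ * x₃) * x₃
        + x₁ * (x₂ * x₃) + 1 / (256 * lam ^ 4) := by ring
    _ = -4 * (4 * u ^ 2 * lam ^ 2 + 3 * X * lam ^ 2 + u ^ 3 + u) ^ 2 * (4 * u ^ 2 * lam ^ 2 + 3 * X * lam ^ 2 + u ^ 3 - 2 * u) ^ 2 / (2304 * lam ^ 6 * u * (16 * u ^ 3 * lam ^ 2 - 3 * Complex.I * Y * lam ^ 2 + 12 * X * u * lam ^ 2 + 4 * u ^ 4 + 4 * u ^ 2) ^ 2)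
      + -3 * lam ^ 2 * (4 * u ^ 2 * lam ^ 2 + 3 * X * lam ^ 2 + u ^ 3 + u) * (16 * u ^ 3 * lam ^ 2 - 3 * Complex.I * Y * lam ^ 2 + 12 * X * u * lam ^ 2 + 4 * u ^ 4 + 4 * u ^ 2) ^ 2 / (2304 * lam ^ 6 * u * (16 * u ^ 3 * lam ^ 2 - 3 * Complex.I * Y * lam ^ 2 + 12 * X * u * lam ^ 2 + 4 * u ^ 4 + 4 * u ^ 2) ^ 2)
      + 12 * u ^ 3 * (4 * u ^ 2 * lam ^ 2 + 3 * X * lam ^ 2 + u ^ 3 + u) * (4 * u ^ 2 * lam ^ 2 + 3 * X * lam ^ 2 + u ^ 3 - 2 * u) ^ 2 / (2304 * lam ^ 6 * u * (16 * u ^ 3 * lam ^ 2 - 3 * Complex.I * Y * lam ^ 2 + 12 * X * u * lam ^ 2 + 4 * u ^ 4 + 4 * u ^ 2) ^ 2)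
      + 24 * lam ^ 2 * u * (16 * u ^ 3 * lam ^ 2 - 3 * Complex.I * Y * lam ^ 2 + 12 * X * u * lam ^ 2 + 4 * u ^ 4 + 4 * u ^ 2) * (4 * u ^ 2 * lam ^ 2 + 3 * X * lam ^ 2 + u ^ 3 + u) * (4 * u ^ 2 * lam ^ 2 + 3 * X * lam ^ 2 + u ^ 3 - 2 * u) / (2304 * lam ^ 6 * u * (16 * u ^ 3 * lam ^ 2 - 3 * Complex.I * Y * lam ^ 2 + 12 * X * u * lam ^ 2 + 4 * u ^ 4 + 4 * u ^ 2) ^ 2)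
      + 9 * lam ^ 2 * u * (16 * u ^ 3 * lam ^ 2 - 3 * Complex.I * Y * lam ^ 2 + 12 * X * u * lam ^ 2 + 4 * u ^ 4 + 4 * u ^ 2) ^ 2 / (2304 * lam ^ 6 * u * (16 * u ^ 3 * lam ^ 2 - 3 * Complex.I * Y * lam ^ 2 + 12 * X * u * lam ^ 2 + 4 * u ^ 4 + 4 * u ^ 2) ^ 2) := by rw [T1, T2, T3, T4, T5]
    _ = (4 * u ^ 2 * lam ^ 2 + 3 * X * lam ^ 2 + u ^ 3 - 2 * u) * (-4 * (4 * u ^ 2 * lam ^ 2 + 3 * X * lam ^ 2 + u ^ 3 + u) ^ 2 * (4 * u ^ 2 * lam ^ 2 + 3 * X * lam ^ 2 + u ^ 3 - 2 * u) + 12 * u ^ 3 * (4 * u ^ 2 * lam ^ 2 + 3 * X * lam ^ 2 + u ^ 3 + u) * (4 * u ^ 2 * lam ^ 2 + 3 * X * lam ^ 2 + u ^ 3 - 2 * u) + 24 * lam ^ 2 * u * (16 * u ^ 3 * lam ^ 2 - 3 * Complex.I * Y * lam ^ 2 + 12 * X * u * lam ^ 2 + 4 * u ^ 4 + 4 * u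 ^ 2) * (4 * u ^ 2 * lam ^ 2 + 3 * X * lam ^ 2 + u ^ 3 + u) - 3 * lam ^ 2 * (16 * u ^ 3 * lam ^ 2 - 3 * Complex.I * Y * lam ^ 2 + 12 * X * u * lam ^ 2 + 4 * u ^ 4 + 4 * u ^ 2) ^ 2) / (2304 * lam ^ 6 * u * (16 * u ^ 3 * lam ^ 2 - 3 * Complex.I * Y * lam ^ 2 + 12 * X * u * lam ^ 2 + 4 * u ^ 4 + 4 * u ^ 2) ^ 2) := hnum
    _ = 0 := by rw [key, mul_zero, zero_div]
end

section
/- Let K be a field, let λ₁, λ₂ ∈ K, and let u, X, Y ∈ K with u ≠ 0. Suppose Y² = X³ + u²((λ₁−1)(λ₂−1)(u + u⁻¹) − 2(λ₁+1)(λ₂+1))X² + 16λ₁λ₂u⁴X. Define v = u + u⁻¹, x = (u²−1)²X/u⁴, y = (u²−1)³Y/u⁶. Then y² = x³ + (v²−4)((λ₁−1)(λ₂−1)v − 2(λ₁+1)(λ₂+1))x² + 16λ₁λ₂(v²−4)²x. -/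
set_option maxHeartbeats 1000000 in
/-- The quotient map φ : (u,X,Y) ↦ (u + u⁻¹, (u²−1)²X/u⁴, (u²−1)³Y/u⁶)
sends solutions of the equation defining 𝒴_{λ₁,λ₂} to solutions of the 𝒥₇ fibration
on Kum(ℰ₁ × ℰ₂). -/
theorem kummer_quotient_phi (K : Type*) [Field K] (l₁ l₂ u X Y : K) (hu : u ≠ 0)
    (h : Y ^ 2 = X ^ 3 + u ^ 2 * ((l₁ - 1) * (l₂ - 1) * (u + u⁻¹)
        - 2 * (l₁ + 1) * (l₂ + 1)) * X ^ 2 + 16 * l₁ * l₂ * u ^ 4 * X)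
    (v x y : K) (hv : v = u + u⁻¹)
    (hx : x = (u ^ 2 - 1) ^ 2 * X / u ^ 4) (hy : y = (u ^ 2 - 1) ^ 3 * Y / u ^ 6) :
    y ^ 2 = x ^ 3 + (v ^ 2 - 4) * ((l₁ - 1) * (l₂ - 1) * v
      - 2 * (l₁ + 1) * (l₂ + 1)) * x ^ 2 + 16 * l₁ * l₂ * (v ^ 2 - 4) ^ 2 * x := by
  subst hv hx hy
  have e1 : ((u ^ 2 - 1) ^ 3 * Y / u ^ 6) ^ 2 = (u ^ 2 - 1) ^ 6 * Y ^ 2 / u ^ 12 := by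
    ring
  have e2 : ((u ^ 2 - 1) ^ 2 * X / u ^ 4) ^ 3
      + ((u + u⁻¹) ^ 2 - 4) * ((l₁ - 1) * (l₂ - 1) * (u + u⁻¹)
        - 2 * (l₁ + 1) * (l₂ + 1)) * ((u ^ 2 - 1) ^ 2 * X / u ^ 4) ^ 2
      + 16 * l₁ * l₂ * ((u + u⁻¹) ^ 2 - 4) ^ 2 * ((u ^ 2 - 1) ^ 2 * X / u ^ 4)
      = (u ^ 2 - 1) ^ 6 * (X ^ 3 + u ^ 2 * ((l₁ - 1) * (l₂ - 1) * (u + u⁻¹)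
        - 2 * (l₁ + 1) * (l₂ + 1)) * X ^ 2 + 16 * l₁ * l₂ * u ^ 4 * X) / u ^ 12 := by
    have hv1 : u + u⁻¹ = (u ^ 2 + 1) / u := by field_simp
    rw [hv1]
    field_simp
    ring
  rw [e1, e2, h]
end

section
/- Let F be a field of characteristic different from 2, let p₁, p₂ ∈ F, and let x, y ∈ F with x ≠ 0 and y² = x³ − (p₂/2)x² + (1/4)((p₂²/4) − p₁)x. Define X = y²/x² and Y = y(16x² − p₂² + 4p₁)/(16x²). Then Y² = X³ + p₂X² + p₁X. -/
/-- The dual two-isogeny φ′ : (x,y) ↦ (y²/x², y(16x² − p₂² + 4p₁)/(16x²))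
sends points of the quotient curve back to points of Y² = X³ + p₂X² + p₁X. -/
theorem van_geemen_sarti_dual_isogeny (F : Type*) [Field F] (h2 : (2 : F) ≠ 0)
    (p₁ p₂ x y : F) (hx : x ≠ 0)
    (h : y ^ 2 = x ^ 3 - (p₂ / 2) * x ^ 2 + (1 / 4) * ((p₂ ^ 2 / 4) - p₁) * x)
    (X Y : F) (hX : X = y ^ 2 / x ^ 2)
    (hY : Y = y * (16 * x ^ 2 - p₂ ^ 2 + 4 * p₁) / (16 * x ^ 2)) :
    Y ^ 2 = X ^ 3 + p₂ * X ^ 2 + p₁ * X := by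
  have h4 : (4 : F) ≠ 0 := by
    have := mul_ne_zero h2 h2; norm_num at this ⊢; exact this
  have h16 : (16 : F) ≠ 0 := by
    have := mul_ne_zero h4 h4; norm_num at this ⊢; exact this
  have h30 : (1073741824 : F) ≠ 0 := by
    have e : (1073741824 : F) = 2 ^ 30 := by norm_num
    rw [e]; exact pow_ne_zero _ h2
  subst hX hY
  have h' : 16 * y ^ 2 = 16 * x ^ 3 - 8 * p₂ * x ^ 2 + (p₂ ^ 2 - 4 * p₁) * x := by
    rw [h]; field_simp; ring
  have key : y ^ 2 * (16 * x ^ 2 - p₂ ^ 2 + 4 * p₁) ^ 2 * x ^ 2 =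
      ((y ^ 2) ^ 3 + p₂ * (y ^ 2) ^ 2 * x ^ 2 + p₁ * (y ^ 2) * x ^ 4) * 256 := by
    linear_combination (-(y ^ 2) * (16 * y ^ 2 + 16 * p₂ * x ^ 2 +
      (16 * x ^ 3 - 8 * p₂ * x ^ 2 + (p₂ ^ 2 - 4 * p₁) * x))) * h'
  field_simp
  linear_combination key
end

section
/- Let K be a field of characteristic zero and let λ₁, λ₂, λ₃ ∈ K with λ₁ ≠ 1 and λ₂ ≠ λ₃. Define A = 2(λ₁+1)/(λ₁−1), B = 2(λ₁λ₂ + λ₁λ₃ − 2λ₂λ₃ − 2λ₁ + λ₂ + λ₃)/((λ₂−λ₃)(λ₁−1)), C = 2(λ₃+λ₂)/(λ₃−λ₂), and D = 4(λ₁ − λ₂λ₃)/((λ₂−λ₃)(λ₁−1)). Then D² = A² + B² + C² + ABC − 4. -/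
set_option maxHeartbeats 800000

/-- The Kummer quartic parameters attached to the Rosenhain roots of a
genus-two curve satisfy D² = A² + B² + C² + ABC − 4. -/
theorem kummer_quartic_parameter_relation (K : Type*) [Field K] [CharZero K]
    (lam₁ lam₂ lam₃ : K) (h₁ : lam₁ ≠ 1) (h₂₃ : lam₂ ≠ lam₃) (A B C D : K)
    (hA : A = 2 * (lam₁ + 1) / (lam₁ - 1))
    (hB : B = 2 * (lam₁ * lam₂ + lam₁ * lam₃ - 2 * lam₂ * lam₃ - 2 * lam₁ + lam₂ + lam₃) /
      ((lam₂ - lam₃) * (lam₁ - 1)))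
    (hC : C = 2 * (lam₃ + lam₂) / (lam₃ - lam₂))
    (hD : D = 4 * (lam₁ - lam₂ * lam₃) / ((lam₂ - lam₃) * (lam₁ - 1))) :
    D ^ 2 = A ^ 2 + B ^ 2 + C ^ 2 + A * B * C - 4 := by
  have h1 : lam₁ - 1 ≠ 0 := sub_ne_zero.mpr h₁
  have h2 : lam₂ - lam₃ ≠ 0 := sub_ne_zero.mpr h₂₃
  have h3 : lam₃ - lam₂ ≠ 0 := sub_ne_zero.mpr h₂₃.symm
  set d : K := (lam₂ - lam₃) * (lam₁ - 1) with hd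
  have hdne : d ≠ 0 := mul_ne_zero h2 h1
  have hAd : A * d = 2 * (lam₁ + 1) * (lam₂ - lam₃) := by
    rw [hA, hd]; field_simp
  have hBd : B * d = 2 * (lam₁ * lam₂ + lam₁ * lam₃ - 2 * lam₂ * lam₃ - 2 * lam₁ + lam₂ + lam₃) := by
    rw [hB, hd]; field_simp
  have hCd : C * d = -(2 * (lam₃ + lam₂) * (lam₁ - 1)) := by
    rw [hC, hd]; field_simp; ring
  have hDd : D * d = 4 * (lam₁ - lam₂ * lam₃) := by
    rw [hD, hd]; field_simp
  have key : (D * d) ^ 2 * d =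
      (A * d) ^ 2 * d + (B * d) ^ 2 * d + (C * d) ^ 2 * d + (A * d) * (B * d) * (C * d)
        - 4 * d ^ 3 := by
    rw [hAd, hBd, hCd, hDd, hd]; ring
  have h3' : d ^ 3 ≠ 0 := pow_ne_zero _ hdne
  have : (D ^ 2 - (A ^ 2 + B ^ 2 + C ^ 2 + A * B * C - 4)) * d ^ 3 = 0 := by
    linear_combination key
  exact sub_eq_zero.mp ((mul_eq_zero.mp this).resolve_right h3')
end

section
/- Let K be a field of characteristic zero and let Λ₁, Λ₂, Λ₃ ∈ K with Λ₂ ≠ Λ₃, Λ₁ ≠ Λ₂, Λ₁ ≠ Λ₃, Λ₁ ≠ 2, and Λ₁ ≠ −2. Define Λ′₁ = 2(2Λ₁ − Λ₂ − Λ₃)/(Λ₂ − Λ₃), Λ′₂ = Λ′₁ − 4(Λ₁−Λ₂)(Λ₁−Λ₃)/((Λ₁+2)(Λ₂−Λ₃)), and Λ′₃ = Λ′₁ − 4(Λ₁−Λ₂)(Λ₁−Λ₃)/((Λ₁−2)(Λ₂−Λ₃)). Then Λ′₂ ≠ Λ′₃, Λ′₁ ≠ Λ′₂, Λ′₁ ≠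 Λ′₃, Λ′₁ ≠ ±2, and the inverse relations hold: Λ₁ = 2(2Λ′₁ − Λ′₂ − Λ′₃)/(Λ′₂ − Λ′₃), Λ₂ − Λ₁ = −4(Λ′₁−Λ′₂)(Λ′₁−Λ′₃)/((Λ′₁+2)(Λ′₂−Λ′₃)), and Λ₃ − Λ₁ = −4(Λ′₁−Λ′₂)(Λ′₁−Λ′₃)/((Λ′₁−2)(Λ′₂−Λ′₃)). -/
/-- The transformation of moduli under a (2,2)-isogeny (Richelot isogeny)
and its stated inverse are mutually inverse. -/
theorem richelot_moduli_inverse (K : Type*) [Field K] [CharZero K]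
    (Λ₁ Λ₂ Λ₃ : K) (h₂₃ : Λ₂ ≠ Λ₃) (h₁₂ : Λ₁ ≠ Λ₂) (h₁₃ : Λ₁ ≠ Λ₃)
    (hp2 : Λ₁ ≠ 2) (hm2 : Λ₁ ≠ -2) (Λ'₁ Λ'₂ Λ'₃ : K)
    (h'₁ : Λ'₁ = 2 * (2 * Λ₁ - Λ₂ - Λ₃) / (Λ₂ - Λ₃))
    (h'₂ : Λ'₂ = Λ'₁ - 4 * (Λ₁ - Λ₂) * (Λ₁ - Λ₃) / ((Λ₁ + 2) * (Λ₂ - Λ₃)))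
    (h'₃ : Λ'₃ = Λ'₁ - 4 * (Λ₁ - Λ₂) * (Λ₁ - Λ₃) / ((Λ₁ - 2) * (Λ₂ - Λ₃))) :
    Λ'₂ ≠ Λ'₃ ∧ Λ'₁ ≠ Λ'₂ ∧ Λ'₁ ≠ Λ'₃ ∧ Λ'₁ ≠ 2 ∧ Λ'₁ ≠ -2 ∧
      Λ₁ = 2 * (2 * Λ'₁ - Λ'₂ - Λ'₃) / (Λ'₂ - Λ'₃) ∧
      Λ₂ - Λ₁ = -(4 * (Λ'₁ - Λ'₂) * (Λ'₁ - Λ'₃)) / ((Λ'₁ + 2) * (Λ'₂ - Λ'₃)) ∧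
      Λ₃ - Λ₁ = -(4 * (Λ'₁ - Λ'₂) * (Λ'₁ - Λ'₃)) / ((Λ'₁ - 2) * (Λ'₂ - Λ'₃)) := by
  have hd : Λ₂ - Λ₃ ≠ 0 := sub_ne_zero.mpr h₂₃
  have hp : Λ₁ - Λ₂ ≠ 0 := sub_ne_zero.mpr h₁₂
  have hq : Λ₁ - Λ₃ ≠ 0 := sub_ne_zero.mpr h₁₃
  have hb : Λ₁ - 2 ≠ 0 := sub_ne_zero.mpr hp2
  have ha : Λ₁ + 2 ≠ 0 := by
    intro h; exact hm2 (by linear_combination h)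
  have e12 : Λ'₁ - Λ'₂ = 4 * (Λ₁ - Λ₂) * (Λ₁ - Λ₃) / ((Λ₁ + 2) * (Λ₂ - Λ₃)) := by
    rw [h'₂]; ring
  have e13 : Λ'₁ - Λ'₃ = 4 * (Λ₁ - Λ₂) * (Λ₁ - Λ₃) / ((Λ₁ - 2) * (Λ₂ - Λ₃)) := by
    rw [h'₃]; ring
  have e23 : Λ'₂ - Λ'₃ = 16 * (Λ₁ - Λ₂) * (Λ₁ - Λ₃) / ((Λ₁ + 2) * ((Λ₁ - 2) * (Λ₂ - Λ₃))) := by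
    rw [h'₂, h'₃]; field_simp; ring
  have em : Λ'₁ - 2 = 4 * (Λ₁ - Λ₂) / (Λ₂ - Λ₃) := by
    rw [h'₁]; field_simp; ring
  have ep : Λ'₁ + 2 = 4 * (Λ₁ - Λ₃) / (Λ₂ - Λ₃) := by
    rw [h'₁]; field_simp; ring
  have key : ∀ x y : K, x ≠ 0 → y ≠ 0 → x / y ≠ 0 := fun x y hx hy => div_ne_zero hx hy
  have h23' : Λ'₂ - Λ'₃ ≠ 0 := by
    rw [e23]
    exact key _ _ (mul_ne_zero (mul_ne_zero (by norm_num) hp) hq)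
      (mul_ne_zero ha (mul_ne_zero hb hd))
  have h12' : Λ'₁ - Λ'₂ ≠ 0 := by
    rw [e12]
    exact key _ _ (mul_ne_zero (mul_ne_zero (by norm_num) hp) hq) (mul_ne_zero ha hd)
  have h13' : Λ'₁ - Λ'₃ ≠ 0 := by
    rw [e13]
    exact key _ _ (mul_ne_zero (mul_ne_zero (by norm_num) hp) hq) (mul_ne_zero hb hd)
  have hm' : Λ'₁ - 2 ≠ 0 := by
    rw [em]; exact key _ _ (mul_ne_zero (by norm_num) hp) hd
  have hp' : Λ'₁ + 2 ≠ 0 := by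
    rw [ep]; exact key _ _ (mul_ne_zero (by norm_num) hq) hd
  refine ⟨sub_ne_zero.mp h23', sub_ne_zero.mp h12', sub_ne_zero.mp h13',
    sub_ne_zero.mp hm', fun h => hp' (by rw [h]; ring), ?_, ?_, ?_⟩
  · rw [eq_div_iff h23']
    have : 2 * (2 * Λ'₁ - Λ'₂ - Λ'₃) = 2 * ((Λ'₁ - Λ'₂) + (Λ'₁ - Λ'₃)) := by ring
    rw [this, e12, e13, e23]
    field_simp
    ring
  · rw [eq_div_iff (mul_ne_zero hp' h23'), ep, e12, e13, e23]
    field_simp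
    ring
  · rw [eq_div_iff (mul_ne_zero hm' h23'), em, e12, e13, e23]
    field_simp
    ring
end

section
/- Let K be a field of characteristic zero and let Λ₁, Λ₂, Λ₃ ∈ K with Λ₂ ≠ Λ₃, Λ₁ ≠ Λ₂, Λ₁ ≠ Λ₃, Λ₁ ≠ 2, and Λ₁ ≠ −2. Define Λ′₁ = 2(2Λ₁ − Λ₂ − Λ₃)/(Λ₂ − Λ₃), Λ′₂ = Λ′₁ − 4(Λ₁−Λ₂)(Λ₁−Λ₃)/((Λ₁+2)(Λ₂−Λ₃)), Λ′₃ = Λ′₁ − 4(Λ₁−Λ₂)(Λ₁−Λ₃)/((Λ₁−2)(Λ₂−Λ₃)), and for a triple (a,b,c) with b ≠ c and a ≠ ±2 set ν(a,b,c) = 16(a−c)(a−b)/((b−c)²(a²−4)). Then ν(Λ′₁,Λ′₂,Λ′₃) · ν(Λ₁,Λ₂,Λ₃) = 1. -/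
set_option maxHeartbeats 1000000

private lemma richelot_aux (K : Type*) [Field K] [CharZero K] (p q d a b s : K)
    (hp : p ≠ 0) (hq : q ≠ 0) (hd : d ≠ 0) (ha : a ≠ 0) (hb : b ≠ 0) (hs : s = a * b) :
    16 * (4 * p * q / (a * d)) * (4 * p * q / (b * d)) /
      ((16 * p * q) ^ 2 * (16 * p * q) / ((d * s) ^ 2 * d ^ 2)) =
    d ^ 2 * s / (16 * q * p) := by
  subst hs
  rw [div_div_eq_mul_div]
  simp only [div_mul_eq_mul_div, mul_div_assoc', div_div]
  have h16 : (16 : K) ≠ 0 := by norm_num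
  rw [div_eq_div_iff (by simp [mul_eq_zero, pow_eq_zero_iff, hp, hq, hd, ha, hb, h16])
    (by simp [mul_eq_zero, hp, hq, h16])]
  ring

private lemma richelot_aux2 (K : Type*) [Field K] (x y : K) (hx : x ≠ 0) (hy : y ≠ 0) :
    x / y * (y / x) = 1 := by
  field_simp

/-- Under the (2,2)-isogeny transformation of moduli, the twist factor ν
is mapped to its reciprocal: ν(Λ′₁,Λ′₂,Λ′₃) · ν(Λ₁,Λ₂,Λ₃) = 1. -/
theorem richelot_twist_factor_reciprocal (K : Type*) [Field K] [CharZero K]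
    (Λ₁ Λ₂ Λ₃ : K) (h₂₃ : Λ₂ ≠ Λ₃) (h₁₂ : Λ₁ ≠ Λ₂) (h₁₃ : Λ₁ ≠ Λ₃)
    (hp2 : Λ₁ ≠ 2) (hm2 : Λ₁ ≠ -2) (Λ'₁ Λ'₂ Λ'₃ : K)
    (h'₁ : Λ'₁ = 2 * (2 * Λ₁ - Λ₂ - Λ₃) / (Λ₂ - Λ₃))
    (h'₂ : Λ'₂ = Λ'₁ - 4 * (Λ₁ - Λ₂) * (Λ₁ - Λ₃) / ((Λ₁ + 2) * (Λ₂ - Λ₃)))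
    (h'₃ : Λ'₃ = Λ'₁ - 4 * (Λ₁ - Λ₂) * (Λ₁ - Λ₃) / ((Λ₁ - 2) * (Λ₂ - Λ₃)))
    (ν : K → K → K → K)
    (hν : ∀ a b c : K, ν a b c = 16 * (a - c) * (a - b) / ((b - c) ^ 2 * (a ^ 2 - 4))) :
    ν Λ'₁ Λ'₂ Λ'₃ * ν Λ₁ Λ₂ Λ₃ = 1 := by
  have hd : Λ₂ - Λ₃ ≠ 0 := sub_ne_zero.mpr h₂₃
  have hpne : Λ₁ - Λ₂ ≠ 0 := sub_ne_zero.mpr h₁₂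
  have hqne : Λ₁ - Λ₃ ≠ 0 := sub_ne_zero.mpr h₁₃
  have h2 : Λ₁ - 2 ≠ 0 := sub_ne_zero.mpr hp2
  have hm : Λ₁ + 2 ≠ 0 := by
    intro h; apply hm2; linear_combination h
  have hfac : Λ₁ ^ 2 - 4 = (Λ₁ - 2) * (Λ₁ + 2) := by ring
  have hsq : Λ₁ ^ 2 - 4 ≠ 0 := by
    rw [hfac]; exact mul_ne_zero h2 hm
  have e23 : Λ'₂ - Λ'₃ = 16 * (Λ₁ - Λ₂) * (Λ₁ - Λ₃) / ((Λ₂ - Λ₃) * (Λ₁ ^ 2 - 4)) := by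
    rw [h'₂, h'₃]; field_simp; ring
  have e12 : Λ'₁ - Λ'₂ = 4 * (Λ₁ - Λ₂) * (Λ₁ - Λ₃) / ((Λ₁ + 2) * (Λ₂ - Λ₃)) := by
    rw [h'₂]; ring
  have e13 : Λ'₁ - Λ'₃ = 4 * (Λ₁ - Λ₂) * (Λ₁ - Λ₃) / ((Λ₁ - 2) * (Λ₂ - Λ₃)) := by
    rw [h'₃]; ring
  have esq : Λ'₁ ^ 2 - 4 = 16 * (Λ₁ - Λ₂) * (Λ₁ - Λ₃) / (Λ₂ - Λ₃) ^ 2 := by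
    rw [h'₁]; field_simp; ring
  have key : ν Λ'₁ Λ'₂ Λ'₃ = (Λ₂ - Λ₃) ^ 2 * (Λ₁ ^ 2 - 4) / (16 * (Λ₁ - Λ₃) * (Λ₁ - Λ₂)) := by
    rw [hν, e23, e12, e13, esq, div_pow, div_mul_div_comm]
    exact richelot_aux K (Λ₁ - Λ₂) (Λ₁ - Λ₃) (Λ₂ - Λ₃) (Λ₁ - 2) (Λ₁ + 2) (Λ₁ ^ 2 - 4)
      hpne hqne hd h2 hm hfac
  rw [key, hν]
  exact richelot_aux2 K ((Λ₂ - Λ₃) ^ 2 * (Λ₁ ^ 2 - 4)) (16 * (Λ₁ - Λ₃) * (Λ₁ - Λ₂))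
    (mul_ne_zero (pow_ne_zero 2 hd) hsq)
    (by simp [mul_eq_zero, hqne, hpne])
end

section
/- Let K be a field, let Λ′₁, Λ′₂, Λ′₃ ∈ K, and let u, X, Y ∈ K with u ≠ 0. Suppose Y² = X³ + 2u²((2Λ′₁ − Λ′₂ − Λ′₃)(u + u⁻¹) + (2Λ′₂Λ′₃ − Λ′₁Λ′₂ − Λ′₁Λ′₃))X² + u⁴(Λ′₂ − Λ′₃)²((u + u⁻¹) − Λ′₁)²X. Define v = u + u⁻¹, x = (u²−1)²X/u⁴, y = (u²−1)³Y/u⁶. Then y² = x³ + 2(v²−4)((2Λ′₁ − Λ′₂ − Λ′₃)v + (2Λ′₂Λ′₃ − Λ′₁Λ′₂ − Λ′₁Λ′₃))x² + (v²−4)²(Λ′₂ − Λ′₃)²(v − Λ′₁)²x. -/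
set_option maxRecDepth 8000
set_option maxHeartbeats 2000000

/-- The quotient map φ : (u,X,Y) ↦ (u + u⁻¹, (u²−1)²X/u⁴, (u²−1)³Y/u⁶)
sends solutions of the equation defining 𝒴 to solutions of the fibration on Kum(Jac 𝒞). -/
theorem kummer_rank17_quotient_phi (K : Type*) [Field K] (Λ'₁ Λ'₂ Λ'₃ u X Y : K) (hu : u ≠ 0)
    (h : Y ^ 2 = X ^ 3 + 2 * u ^ 2 * ((2 * Λ'₁ - Λ'₂ - Λ'₃) * (u + u⁻¹)
        + (2 * Λ'₂ * Λ'₃ - Λ'₁ * Λ'₂ - Λ'₁ * Λ'₃)) * X ^ 2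
      + u ^ 4 * (Λ'₂ - Λ'₃) ^ 2 * ((u + u⁻¹) - Λ'₁) ^ 2 * X)
    (v x y : K) (hv : v = u + u⁻¹)
    (hx : x = (u ^ 2 - 1) ^ 2 * X / u ^ 4) (hy : y = (u ^ 2 - 1) ^ 3 * Y / u ^ 6) :
    y ^ 2 = x ^ 3 + 2 * (v ^ 2 - 4) * ((2 * Λ'₁ - Λ'₂ - Λ'₃) * v
        + (2 * Λ'₂ * Λ'₃ - Λ'₁ * Λ'₂ - Λ'₁ * Λ'₃)) * x ^ 2
      + (v ^ 2 - 4) ^ 2 * (Λ'₂ - Λ'₃) ^ 2 * (v - Λ'₁) ^ 2 * x := by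
  have hD : ((u ^ 4) ^ 3 * (u ^ 2 * u * (u ^ 4) ^ 2) : K) ≠ 0 := by simp [hu]
  subst hv hx hy
  field_simp at h ⊢
  linear_combination (u ^ 2 - 1) ^ 6 * h
end

section
/- Let K be a field of characteristic different from 2, let λ₁, λ₂ ∈ K, and let u, x, y ∈ K with u ≠ 0. Write P(v) = (λ₁−1)(λ₂−1)v − 2(λ₁+1)(λ₂+1). Suppose y² = x³ − (1/2)u²·P(u + u⁻¹)·x² + (1/16)u⁴·(P(u + u⁻¹)² − 64λ₁λ₂)·x. Define v = u + u⁻¹, X = (u²−1)²x/u⁴, Y = (u²−1)³y/u⁶. Then Y² = X³ − (1/2)(v²−4)·P(v)·X² + (1/16)(v²−4)²·(P(v)² − 64λ₁λ₂)·X. -/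
/-- The quotient map φ′ : (u,x,y) ↦ (u + u⁻¹, (u²−1)²x/u⁴, (u²−1)³y/u⁶)
sends solutions of the 𝒥₆ fibration on Kum(ℰ′₁ × ℰ′₂) to solutions of the equation
defining 𝒴′_{lam₁,lam₂}. -/
theorem kummer_quotient_phi_prime (K : Type*) [Field K] (h2 : (2 : K) ≠ 0)
    (lam₁ lam₂ u x y : K) (hu : u ≠ 0) (P : K → K)
    (hP : ∀ v : K, P v = (lam₁ - 1) * (lam₂ - 1) * v - 2 * (lam₁ + 1) * (lam₂ + 1))
    (h : y ^ 2 = x ^ 3 - (1 / 2) * u ^ 2 * P (u + u⁻¹) * x ^ 2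
      + (1 / 16) * u ^ 4 * (P (u + u⁻¹) ^ 2 - 64 * lam₁ * lam₂) * x)
    (v X Y : K) (hv : v = u + u⁻¹)
    (hX : X = (u ^ 2 - 1) ^ 2 * x / u ^ 4) (hY : Y = (u ^ 2 - 1) ^ 3 * y / u ^ 6) :
    Y ^ 2 = X ^ 3 - (1 / 2) * (v ^ 2 - 4) * P v * X ^ 2
      + (1 / 16) * (v ^ 2 - 4) ^ 2 * (P v ^ 2 - 64 * lam₁ * lam₂) * X := by
  have hinv : u * u⁻¹ = 1 := mul_inv_cancel₀ hu
  subst hv hX hY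
  set p := P (u + u⁻¹) with hp
  set xt := x * u⁻¹ ^ 2 with hxt
  set yt := y * u⁻¹ ^ 3 with hyt
  set w := u - u⁻¹ with hw
  have ht : yt ^ 2 = xt ^ 3 - (1 / 2) * p * xt ^ 2
      + (1 / 16) * (p ^ 2 - 64 * lam₁ * lam₂) * xt := by
    rw [hxt, hyt]
    linear_combination (u⁻¹ ^ 6) * h +
      ((1/16)*u⁻¹^2*x*p^2 + (-(1/16))*64*u⁻¹^2*x*lam₁*lam₂ + (-1/2)*u⁻¹^4*x^2*p
        + (1/16)*u*u⁻¹^3*x*p^2 + (-(1/16))*64*u*u⁻¹^3*x*lam₁*lam₂ + (-1/2)*u*u⁻¹^5*x^2*p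
        + (1/16)*u^2*u⁻¹^4*x*p^2 + (-(1/16))*64*u^2*u⁻¹^4*x*lam₁*lam₂
        + (1/16)*u^3*u⁻¹^5*x*p^2 + (-(1/16))*64*u^3*u⁻¹^5*x*lam₁*lam₂) * hinv
  have hXw : (u ^ 2 - 1) ^ 2 * x / u ^ 4 = w ^ 2 * xt := by
    rw [hxt, hw]
    linear_combination ((-2)*u*u⁻¹^3*x + u^2*u⁻¹^2*x + u^3*u⁻¹^3*x) * hinv
  have hYw : (u ^ 2 - 1) ^ 3 * y / u ^ 6 = w ^ 3 * yt := by
    rw [hyt, hw]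
    linear_combination (3*u*u⁻¹^5*y + (-3)*u^2*u⁻¹^4*y + u^3*u⁻¹^3*y
      + (-3)*u^3*u⁻¹^5*y + u^4*u⁻¹^4*y + u^5*u⁻¹^5*y) * hinv
  have hv4 : (u + u⁻¹) ^ 2 - 4 = w ^ 2 := by
    rw [hw]; linear_combination 4 * hinv
  rw [hXw, hYw, hv4]
  linear_combination w ^ 6 * ht
end

section
/- Let p be an odd prime and let a, b, c ∈ ZMod p. Let N be the number of triples (x, w, y) ∈ (ZMod p)³ satisfying y² = −(x²−4)(x−w)(w−a)(w−b)(w−c). Then, as elements of ZMod p, N = 1 + (−1)^{(p−1)/2} · Σ_{ℓ=0}^{(p−1)/2} 2^ℓ · Σ_{s+t+ℓ = p−1, 0 ≤ s,t ≤ (p−1)/2} Σ_{i+j+k+ℓ = p−1, 0 ≤ i,j,k ≤ (p−1)/2} C((p−1)/2, s)·C((p−1)/2, t)·C((p−1)/2, ℓ)·C((p−1)/2, i)·C((p−1)/2, j)·C((p−1)/2, k)·(−1)^t·aⁱ·bʲ·cᵏ, where C(n, k) denotes the binomial coefficient. -/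
open Finset

open Finset

lemma aux_neg_one_pow {R : Type*} [Monoid R] [HasDistribNeg R] {n k : ℕ} (h : n % 2 = k % 2) :
    (-1 : R)^n = (-1)^k := by
  conv_lhs => rw [← Nat.div_add_mod n 2]
  conv_rhs => rw [← Nat.div_add_mod k 2]
  rw [h, pow_add, pow_add, pow_mul, pow_mul, neg_one_sq, one_pow, one_pow]

lemma aux_xsum (p : ℕ) [Fact p.Prime] (n : ℕ) :
    (∑ x : ZMod p, x ^ n) = if n ≠ 0 ∧ (p - 1) ∣ n then (-1 : ZMod p) else 0 := by
  by_cases hn : n = 0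
  · subst hn
    rw [if_neg (by simp)]
    simp only [pow_zero, Finset.sum_const, Finset.card_univ, ZMod.card, nsmul_eq_mul, mul_one]
    exact ZMod.natCast_self p
  · have key : ∑ x : ZMod p, x ^ n = ∑ x : (ZMod p)ˣ, (x : ZMod p) ^ n := by
      let φ : (ZMod p)ˣ ↪ ZMod p := ⟨fun x => x, fun _ _ h => Units.ext h⟩
      have hφ : Finset.univ.map φ = Finset.univ \ {(0 : ZMod p)} := by
        ext x
        simp only [mem_map, mem_univ, Function.Embedding.coeFn_mk, true_and, mem_sdiff,
          mem_singleton, φ]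
        constructor
        · rintro ⟨u, rfl⟩
          exact u.ne_zero
        · intro hx
          exact ⟨(isUnit_iff_ne_zero.mpr (by simpa using hx)).unit, rfl⟩
      have h2 : ∑ x ∈ Finset.univ \ {(0:ZMod p)}, x ^ n = ∑ x : ZMod p, x ^ n := by
        have h3 := Finset.sum_sdiff (f := fun x : ZMod p => x ^ n) (Finset.subset_univ {(0:ZMod p)})
        simp only [Finset.sum_singleton, zero_pow hn, add_zero] at h3
        exact h3
      rw [← h2, ← hφ, Finset.sum_map]
      rfl
    rw [key]
    have h4 := FiniteField.sum_pow_units (ZMod p) n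
    rw [ZMod.card] at h4
    rw [h4, if_congr (Iff.symm (and_iff_right hn)) rfl rfl]

lemma aux_condx {m s t l : ℕ} (hm : 1 ≤ m) (hs : s ≤ m) (ht : t ≤ m) (hl : l ≤ m) :
    (s + t + l ≠ 0 ∧ 2 * m ∣ s + t + l) ↔ s + t + l = 2 * m := by
  constructor
  · rintro ⟨hne, e, he⟩
    have hW : s + t + l ≤ 3 * m := by omega
    rw [he] at hW
    have he2 : e ≤ 1 := by nlinarith
    interval_cases e <;> omega
  · intro h
    exact ⟨by omega, 1, by omega⟩

lemma aux_condw {m l i j k : ℕ} (hm : 1 ≤ m) (hl : l ≤ m) (hi : i ≤ m) (hj : j ≤ m)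
    (hk : k ≤ m) :
    ((m - l) + ((m - i) + ((m - j) + (m - k))) ≠ 0 ∧
        2 * m ∣ (m - l) + ((m - i) + ((m - j) + (m - k)))) ↔
      (i + j + k + l = 2 * m ∨ (i = 0 ∧ j = 0 ∧ k = 0 ∧ l = 0)) := by
  constructor
  · rintro ⟨hne, e, he⟩
    have hW : m - l + (m - i + (m - j + (m - k))) ≤ 4 * m := by omega
    rw [he] at hW
    have he2 : e ≤ 2 := by nlinarith
    interval_cases e <;> omega
  · rintro (h | ⟨rfl, rfl, rfl, rfl⟩)
    · exact ⟨by omega, 1, by omega⟩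
    · exact ⟨by omega, 2, by omega⟩

lemma aux_swap3 {M : Type*} [AddCommMonoid M] {α : Type*} (u : Finset α) (r : Finset ℕ)
    (f : α → ℕ → ℕ → ℕ → M) :
    ∑ w ∈ u, ∑ i ∈ r, ∑ j ∈ r, ∑ k ∈ r, f w i j k
      = ∑ i ∈ r, ∑ j ∈ r, ∑ k ∈ r, ∑ w ∈ u, f w i j k := by
  rw [Finset.sum_comm]
  exact Finset.sum_congr rfl fun i _ => by
    rw [Finset.sum_comm]
    exact Finset.sum_congr rfl fun j _ => Finset.sum_comm

lemma aux_swap2 {M : Type*} [AddCommMonoid M] {α : Type*} (u : Finset α) (r : Finset ℕ)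
    (f : α → ℕ → ℕ → M) :
    ∑ w ∈ u, ∑ i ∈ r, ∑ j ∈ r, f w i j = ∑ i ∈ r, ∑ j ∈ r, ∑ w ∈ u, f w i j := by
  rw [Finset.sum_comm]
  exact Finset.sum_congr rfl fun i _ => Finset.sum_comm

lemma aux_Ex (p : ℕ) [Fact p.Prime] (m : ℕ) (hm : 1 ≤ m) (hm2 : p - 1 = 2 * m)
    (l : ℕ) (hl : l ≤ m) :
    ∑ x : ZMod p, ((x - 2)^m * (x + 2)^m) * x^l
      = -(∑ s ∈ range (m+1), ∑ t ∈ range (m+1),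
          if s + t + l = 2 * m then
            (m.choose s : ZMod p) * (m.choose t) * (-2)^(m-s) * 2^(m-t) else 0) := by
  have e1 : ∀ x : ZMod p, ((x - 2)^m * (x + 2)^m) * x^l
      = ∑ s ∈ range (m+1), ∑ t ∈ range (m+1),
          ((m.choose s : ZMod p) * (m.choose t) * (-2)^(m-s) * 2^(m-t)) * x^(s+t+l) := by
    intro x
    rw [show (x - 2 : ZMod p) = x + (-2) from by ring, add_pow, add_pow, Finset.sum_mul_sum,
      Finset.sum_mul]
    refine Finset.sum_congr rfl fun s hs => ?_
    rw [Finset.sum_mul]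
    refine Finset.sum_congr rfl fun t ht => ?_
    ring
  rw [Finset.sum_congr rfl fun x _ => e1 x, aux_swap2]
  rw [show -(∑ s ∈ range (m+1), ∑ t ∈ range (m+1),
      if s + t + l = 2 * m then
        (m.choose s : ZMod p) * (m.choose t) * (-2)^(m-s) * 2^(m-t) else 0)
    = ∑ s ∈ range (m+1), ∑ t ∈ range (m+1),
        -(if s + t + l = 2 * m then
          (m.choose s : ZMod p) * (m.choose t) * (-2)^(m-s) * 2^(m-t) else 0) from by
      simp [Finset.sum_neg_distrib]]
  refine Finset.sum_congr rfl fun s hs => Finset.sum_congr rfl fun t ht => ?_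
  rw [← Finset.mul_sum, aux_xsum, hm2]
  have hiff := aux_condx hm (Nat.lt_succ_iff.mp (mem_range.mp hs))
    (Nat.lt_succ_iff.mp (mem_range.mp ht)) hl
  by_cases h : s + t + l = 2 * m
  · rw [if_pos (hiff.mpr h), if_pos h]; ring
  · rw [if_neg (fun hc => h (hiff.mp hc)), if_neg h]; ring

lemma aux_D (p : ℕ) [Fact p.Prime] (m : ℕ) (hm : 1 ≤ m) (hm2 : p - 1 = 2 * m)
    (a b c : ZMod p) (l : ℕ) (hl : l ≤ m) :
    ∑ w : ZMod p, w^(m-l) * ((w - a)^m * ((w - b)^m * (w - c)^m))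
      = -(∑ i ∈ range (m+1), ∑ j ∈ range (m+1), ∑ k ∈ range (m+1),
          if i + j + k + l = 2 * m then
            (m.choose i : ZMod p) * (m.choose j) * (m.choose k)
              * (-1)^(i+j+k) * (a^i * b^j * c^k) else 0)
        - (if l = 0 then 1 else 0) := by
  have e1 : ∀ w : ZMod p, w^(m-l) * ((w - a)^m * ((w - b)^m * (w - c)^m))
      = ∑ i ∈ range (m+1), ∑ j ∈ range (m+1), ∑ k ∈ range (m+1),
          ((m.choose i : ZMod p) * (m.choose j) * (m.choose k)
            * (-1)^(i+j+k) * (a^i * b^j * c^k))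
            * w^((m-l) + ((m-i) + ((m-j) + (m-k)))) := by
    intro w
    rw [show (w - a : ZMod p) = (-1)*a + w from by ring, add_pow,
      show (w - b : ZMod p) = (-1)*b + w from by ring, add_pow,
      show (w - c : ZMod p) = (-1)*c + w from by ring, add_pow]
    rw [Finset.sum_mul_sum, Finset.sum_mul_sum, Finset.mul_sum]
    refine Finset.sum_congr rfl fun i _ => ?_
    rw [Finset.mul_sum]
    refine Finset.sum_congr rfl fun j _ => ?_
    rw [Finset.mul_sum, Finset.mul_sum]
    refine Finset.sum_congr rfl fun k _ => ?_
    ring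
  rw [Finset.sum_congr rfl fun w _ => e1 w, aux_swap3]
  have step : ∀ i ∈ range (m+1), ∀ j ∈ range (m+1), ∀ k ∈ range (m+1),
      (∑ w : ZMod p, ((m.choose i : ZMod p) * (m.choose j) * (m.choose k)
          * (-1)^(i+j+k) * (a^i * b^j * c^k)) * w^((m-l) + ((m-i) + ((m-j) + (m-k)))))
      = (-(if i + j + k + l = 2 * m then
            (m.choose i : ZMod p) * (m.choose j) * (m.choose k)
              * (-1)^(i+j+k) * (a^i * b^j * c^k) else 0))
        + (-(if i = 0 ∧ j = 0 ∧ k = 0 ∧ l = 0 then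
            (m.choose i : ZMod p) * (m.choose j) * (m.choose k)
              * (-1)^(i+j+k) * (a^i * b^j * c^k) else 0)) := by
    intro i hi j hj k hk
    rw [← Finset.mul_sum, aux_xsum, hm2]
    have hiff := aux_condw hm hl (Nat.lt_succ_iff.mp (mem_range.mp hi))
      (Nat.lt_succ_iff.mp (mem_range.mp hj)) (Nat.lt_succ_iff.mp (mem_range.mp hk))
    by_cases hA : i + j + k + l = 2 * m
    · have hB : ¬(i = 0 ∧ j = 0 ∧ k = 0 ∧ l = 0) := by omega
      rw [if_pos (hiff.mpr (Or.inl hA)), if_pos hA, if_neg hB]; ring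
    · by_cases hB : i = 0 ∧ j = 0 ∧ k = 0 ∧ l = 0
      · rw [if_pos (hiff.mpr (Or.inr hB)), if_neg hA, if_pos hB]; ring
      · rw [if_neg (by rw [hiff]; tauto), if_neg hA, if_neg hB]; ring
  rw [Finset.sum_congr rfl fun i hi => Finset.sum_congr rfl fun j hj =>
    Finset.sum_congr rfl fun k hk => step i hi j hj k hk]
  simp only [Finset.sum_add_distrib, Finset.sum_neg_distrib]
  have hz : (∑ i ∈ range (m+1), ∑ j ∈ range (m+1), ∑ k ∈ range (m+1),
      if i = 0 ∧ j = 0 ∧ k = 0 ∧ l = 0 then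
        (m.choose i : ZMod p) * (m.choose j) * (m.choose k)
          * (-1)^(i+j+k) * (a^i * b^j * c^k) else 0)
      = (if l = 0 then (1 : ZMod p) else 0) := by
    have h0m : (0:ℕ) ∈ range (m+1) := mem_range.mpr (Nat.succ_pos m)
    rw [Finset.sum_eq_single_of_mem 0 h0m (fun i hi hine =>
      Finset.sum_eq_zero fun j _ => Finset.sum_eq_zero fun k _ => if_neg (by tauto))]
    rw [Finset.sum_eq_single_of_mem 0 h0m (fun j hj hjne =>
      Finset.sum_eq_zero fun k _ => if_neg (by tauto))]
    rw [Finset.sum_eq_single_of_mem 0 h0m (fun k hk hkne => if_neg (by tauto))]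
    by_cases hl0 : l = 0 <;> simp [hl0]
  rw [hz, sub_eq_add_neg]

lemma aux_binom_xw {R : Type*} [CommRing R] (m : ℕ) (x w : R) :
    (x - w)^m = ∑ l ∈ range (m+1), (m.choose l : R) * (-1)^(m-l) * x^l * w^(m-l) := by
  rw [show x - w = x + (-1)*w from by ring, add_pow]
  exact Finset.sum_congr rfl fun l _ => by ring

lemma aux_P0 (p : ℕ) [Fact p.Prime] (m : ℕ) :
    (∑ s ∈ range (m+1), ∑ t ∈ range (m+1),
      if s + t + 0 = 2 * m then
        (m.choose s : ZMod p) * (m.choose t) * (-2)^(m-s) * 2^(m-t) else 0) = 1 := by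
  have hmm : m ∈ range (m+1) := mem_range.mpr (Nat.lt_succ_self m)
  rw [Finset.sum_eq_single_of_mem m hmm (fun s hs hsne =>
    Finset.sum_eq_zero fun t ht => if_neg (by
      have := mem_range.mp hs; have := mem_range.mp ht; omega))]
  rw [Finset.sum_eq_single_of_mem m hmm (fun t ht htne => if_neg (by
    have := mem_range.mp ht; omega))]
  rw [if_pos (by omega)]
  simp [Nat.choose_self, Nat.sub_self]

lemma aux_main (p : ℕ) [Fact p.Prime] (m : ℕ) (hm : 1 ≤ m) (hm2 : p - 1 = 2 * m)
    (a b c : ZMod p) :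
    ∑ x : ZMod p, ∑ w : ZMod p,
        ((x-2)^m * (x+2)^m) * ((x-w)^m * ((w-a)^m * ((w-b)^m * (w-c)^m)))
      = (-1)^m + ∑ l ∈ range (m+1), (m.choose l : ZMod p) * (-1)^(m-l) *
          ((∑ i ∈ range (m+1), ∑ j ∈ range (m+1), ∑ k ∈ range (m+1),
              if i + j + k + l = 2 * m then
                (m.choose i : ZMod p) * (m.choose j) * (m.choose k)
                  * (-1)^(i+j+k) * (a^i * b^j * c^k) else 0)
            * (∑ s ∈ range (m+1), ∑ t ∈ range (m+1),
                if s + t + l = 2 * m then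
                  (m.choose s : ZMod p) * (m.choose t) * (-2)^(m-s) * 2^(m-t) else 0)) := by
  set Q : ℕ → ZMod p := fun l => ∑ i ∈ range (m+1), ∑ j ∈ range (m+1), ∑ k ∈ range (m+1),
      if i + j + k + l = 2 * m then
        (m.choose i : ZMod p) * (m.choose j) * (m.choose k)
          * (-1)^(i+j+k) * (a^i * b^j * c^k) else 0 with hQ
  set P : ℕ → ZMod p := fun l => ∑ s ∈ range (m+1), ∑ t ∈ range (m+1),
      if s + t + l = 2 * m then
        (m.choose s : ZMod p) * (m.choose t) * (-2)^(m-s) * 2^(m-t) else 0 with hP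
  have hB : ∀ x : ZMod p, (∑ w : ZMod p, (x-w)^m * ((w-a)^m * ((w-b)^m * (w-c)^m)))
      = ∑ l ∈ range (m+1), (m.choose l : ZMod p) * (-1)^(m-l) * x^l *
          (∑ w : ZMod p, w^(m-l) * ((w-a)^m * ((w-b)^m * (w-c)^m))) := by
    intro x
    have e : ∀ w : ZMod p, (x-w)^m * ((w-a)^m * ((w-b)^m * (w-c)^m))
        = ∑ l ∈ range (m+1), (m.choose l : ZMod p)*(-1)^(m-l)*x^l
            * (w^(m-l) * ((w-a)^m * ((w-b)^m * (w-c)^m))) := by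
      intro w
      rw [aux_binom_xw, Finset.sum_mul]
      exact Finset.sum_congr rfl fun l _ => by ring
    rw [Finset.sum_congr rfl fun w _ => e w, Finset.sum_comm]
    exact Finset.sum_congr rfl fun l _ => by rw [← Finset.mul_sum]
  have step1 : ∑ x : ZMod p, ∑ w : ZMod p,
      ((x-2)^m * (x+2)^m) * ((x-w)^m * ((w-a)^m * ((w-b)^m * (w-c)^m)))
      = ∑ l ∈ range (m+1), (m.choose l : ZMod p) * (-1)^(m-l)
          * ((∑ w : ZMod p, w^(m-l) * ((w-a)^m * ((w-b)^m * (w-c)^m)))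
             * (∑ x : ZMod p, ((x-2)^m * (x+2)^m) * x^l)) := by
    have e2 : ∀ x : ZMod p, (∑ w : ZMod p,
        ((x-2)^m * (x+2)^m) * ((x-w)^m * ((w-a)^m * ((w-b)^m * (w-c)^m))))
        = ∑ l ∈ range (m+1), ((m.choose l : ZMod p) * (-1)^(m-l)
            * (∑ w : ZMod p, w^(m-l) * ((w-a)^m * ((w-b)^m * (w-c)^m))))
            * (((x-2)^m * (x+2)^m) * x^l) := by
      intro x
      rw [← Finset.mul_sum, hB x, Finset.mul_sum]
      exact Finset.sum_congr rfl fun l _ => by ring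
    rw [Finset.sum_congr rfl fun x _ => e2 x, Finset.sum_comm]
    exact Finset.sum_congr rfl fun l _ => by rw [← Finset.mul_sum]; ring
  rw [step1]
  have step2 : ∀ l ∈ range (m+1), (m.choose l : ZMod p) * (-1)^(m-l)
      * ((∑ w : ZMod p, w^(m-l) * ((w-a)^m * ((w-b)^m * (w-c)^m)))
         * (∑ x : ZMod p, ((x-2)^m * (x+2)^m) * x^l))
      = (m.choose l : ZMod p) * (-1)^(m-l) * (Q l * P l)
        + (if l = 0 then 1 else 0) * ((m.choose l : ZMod p) * (-1)^(m-l) * P l) := by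
    intro l hl
    have hlm := Nat.lt_succ_iff.mp (mem_range.mp hl)
    rw [aux_D p m hm hm2 a b c l hlm, aux_Ex p m hm hm2 l hlm]
    simp only [hQ, hP]
    ring
  rw [Finset.sum_congr rfl step2, Finset.sum_add_distrib]
  have hextra : (∑ l ∈ range (m+1),
      (if l = 0 then (1:ZMod p) else 0) * ((m.choose l : ZMod p) * (-1)^(m-l) * P l))
      = (-1)^m := by
    rw [Finset.sum_eq_single_of_mem 0 (mem_range.mpr (Nat.succ_pos m))
      (fun l _ hlne => by rw [if_neg hlne, zero_mul])]
    rw [if_pos rfl, one_mul]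
    simp only [hP]
    rw [aux_P0 p m]
    simp [Nat.choose_zero_right, Nat.sub_zero]
  rw [hextra]
  simp only [hQ, hP]
  ring

lemma aux_count (p : ℕ) [Fact p.Prime] (hp2 : p ≠ 2) (v : ZMod p) :
    (∑ y : ZMod p, if y^2 = v then (1 : ZMod p) else 0) = 1 + v ^ (p / 2) := by
  have hchar : ringChar (ZMod p) ≠ 2 := by
    rw [ZMod.ringChar_zmod_n]
    exact_mod_cast hp2
  have h1 := quadraticChar_card_sqrts hchar v
  have h2 := quadraticChar_eq_pow_of_char_ne_two' hchar v
  rw [ZMod.card] at h2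
  rw [Finset.sum_boole]
  have hset : {y : ZMod p | y^2 = v}.toFinset = Finset.univ.filter (fun y => y^2 = v) :=
    Set.toFinset_setOf _
  rw [hset] at h1
  have h3 := congrArg (fun z : ℤ => (z : ZMod p)) h1
  push_cast at h3
  rw [h3, h2, add_comm]

lemma aux_final (p : ℕ) [Fact p.Prime] (m : ℕ) (hm : 1 ≤ m) (a b c : ZMod p)
    (l : ℕ) (hl : l ≤ m) :
    (m.choose l : ZMod p) * (-1)^(m-l) *
      ((∑ i ∈ range (m+1), ∑ j ∈ range (m+1), ∑ k ∈ range (m+1),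
          if i + j + k + l = 2 * m then
            (m.choose i : ZMod p) * (m.choose j) * (m.choose k)
              * (-1)^(i+j+k) * (a^i * b^j * c^k) else 0)
        * (∑ s ∈ range (m+1), ∑ t ∈ range (m+1),
            if s + t + l = 2 * m then
              (m.choose s : ZMod p) * (m.choose t) * (-2)^(m-s) * 2^(m-t) else 0))
    = 2^l * (∑ s ∈ range (m+1), ∑ t ∈ range (m+1),
        ∑ i ∈ range (m+1), ∑ j ∈ range (m+1), ∑ k ∈ range (m+1),
          if s + t + l = 2 * m ∧ i + j + k + l = 2 * m then
            (m.choose s : ZMod p) * (m.choose t : ZMod p) * (m.choose l : ZMod p)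
              * (m.choose i : ZMod p) * (m.choose j : ZMod p) * (m.choose k : ZMod p)
              * (-1)^t * a^i * b^j * c^k
          else 0) := by
  have hPswap : (∑ s ∈ range (m+1), ∑ t ∈ range (m+1),
      if s + t + l = 2 * m then
        (m.choose s : ZMod p) * (m.choose t) * (-2)^(m-s) * 2^(m-t) else 0)
      = ∑ s ∈ range (m+1), ∑ t ∈ range (m+1),
          if s + t + l = 2 * m then
            (m.choose s : ZMod p) * (m.choose t) * (-2)^(m-t) * 2^(m-s) else 0 := by
    rw [Finset.sum_comm]
    exact Finset.sum_congr rfl fun s _ => Finset.sum_congr rfl fun t _ =>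
      if_congr (by omega) (by ring) rfl
  rw [hPswap, mul_comm (∑ i ∈ range (m+1), ∑ j ∈ range (m+1), ∑ k ∈ range (m+1),
      if i + j + k + l = 2 * m then
        (m.choose i : ZMod p) * (m.choose j) * (m.choose k)
          * (-1)^(i+j+k) * (a^i * b^j * c^k) else 0)]
  conv_rhs => simp only [Finset.mul_sum, mul_ite, mul_zero]
  rw [Finset.sum_mul, Finset.mul_sum]
  refine Finset.sum_congr rfl fun s hs => ?_
  rw [Finset.sum_mul, Finset.mul_sum]
  refine Finset.sum_congr rfl fun t ht => ?_
  rw [Finset.mul_sum, Finset.mul_sum]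
  refine Finset.sum_congr rfl fun i hi => ?_
  rw [Finset.mul_sum, Finset.mul_sum]
  refine Finset.sum_congr rfl fun j hj => ?_
  rw [Finset.mul_sum, Finset.mul_sum]
  refine Finset.sum_congr rfl fun k hk => ?_
  have hsm := Nat.lt_succ_iff.mp (mem_range.mp hs)
  have htm := Nat.lt_succ_iff.mp (mem_range.mp ht)
  have him := Nat.lt_succ_iff.mp (mem_range.mp hi)
  have hjm := Nat.lt_succ_iff.mp (mem_range.mp hj)
  have hkm := Nat.lt_succ_iff.mp (mem_range.mp hk)
  by_cases h1 : s + t + l = 2 * m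
  · by_cases h2 : i + j + k + l = 2 * m
    · rw [if_pos h1, if_pos h2, if_pos ⟨h1, h2⟩]
      have hpw2 : (2:ZMod p)^(m-s) * 2^(m-t) = 2^l := by
        rw [← pow_add]; congr 1; omega
      have hsgn : (-1:ZMod p)^(m-l) * ((-1)^(m-t) * (-1)^(i+j+k)) = (-1)^t := by
        rw [← pow_add, ← pow_add]; exact aux_neg_one_pow (by omega)
      rw [show ((-2 : ZMod p))^(m-t) = (-1)^(m-t) * 2^(m-t) from by
        rw [← mul_pow]; norm_num]
      calc (m.choose l : ZMod p) * (-1)^(m-l) *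
            ((m.choose s : ZMod p) * (m.choose t) * ((-1)^(m-t) * 2^(m-t)) * 2^(m-s)
              * ((m.choose i : ZMod p) * (m.choose j) * (m.choose k)
                  * (-1)^(i+j+k) * (a^i * b^j * c^k)))
          = ((-1:ZMod p)^(m-l) * ((-1)^(m-t) * (-1)^(i+j+k)))
              * (((2:ZMod p)^(m-s) * 2^(m-t))
              * ((m.choose l : ZMod p) * (m.choose s) * (m.choose t) * (m.choose i)
                  * (m.choose j) * (m.choose k) * (a^i * b^j * c^k))) := by ring
        _ = _ := by rw [hsgn, hpw2]; ring
    · rw [if_neg h2, if_neg (show ¬(s + t + l = 2 * m ∧ i + j + k + l = 2 * m) from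
        fun hc => h2 hc.2)]
      ring
  · rw [if_neg h1, if_neg (show ¬(s + t + l = 2 * m ∧ i + j + k + l = 2 * m) from
      fun hc => h1 hc.1)]
    ring



/-- The rational point-count of the twisted Legendre pencil
y² = −(x²−4)(x−w)(w−a)(w−b)(w−c) over 𝔽_p, modulo p. -/
theorem twisted_legendre_point_count (p : ℕ) [Fact p.Prime] (hp : Odd p)
    (a b c : ZMod p) (N : ℕ)
    (hN : N = (Finset.univ.filter (fun q : ZMod p × ZMod p × ZMod p =>
      q.2.2 ^ 2 = -(q.1 ^ 2 - 4) * (q.1 - q.2.1) * (q.2.1 - a) * (q.2.1 - b)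
        * (q.2.1 - c))).card) :
    (N : ZMod p) = 1 + (-1 : ZMod p) ^ ((p - 1) / 2) *
      ∑ ℓ ∈ Finset.range ((p - 1) / 2 + 1), (2 : ZMod p) ^ ℓ *
        ∑ s ∈ Finset.range ((p - 1) / 2 + 1), ∑ t ∈ Finset.range ((p - 1) / 2 + 1),
          ∑ i ∈ Finset.range ((p - 1) / 2 + 1), ∑ j ∈ Finset.range ((p - 1) / 2 + 1),
            ∑ k ∈ Finset.range ((p - 1) / 2 + 1),
              if s + t + ℓ = p - 1 ∧ i + j + k + ℓ = p - 1 then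
                (((p - 1) / 2).choose s : ZMod p) * (((p - 1) / 2).choose t : ZMod p) *
                (((p - 1) / 2).choose ℓ : ZMod p) * (((p - 1) / 2).choose i : ZMod p) *
                (((p - 1) / 2).choose j : ZMod p) * (((p - 1) / 2).choose k : ZMod p) *
                (-1 : ZMod p) ^ t * a ^ i * b ^ j * c ^ k
              else 0 := by
  obtain ⟨r, hr⟩ := hp
  have hprime : p.Prime := Fact.out
  have hple : 2 ≤ p := hprime.two_le
  have hp2 : p ≠ 2 := by omega
  set m := (p - 1) / 2 with hmdef
  have hm2 : p - 1 = 2 * m := by omega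
  have hm1 : 1 ≤ m := by omega
  have hp2m : p / 2 = m := by omega
  have hcount : (N : ZMod p) = ∑ x : ZMod p, ∑ w : ZMod p,
      (1 + (-(x ^ 2 - 4) * (x - w) * (w - a) * (w - b) * (w - c)) ^ m) := by
    rw [hN, Finset.card_filter]
    push_cast
    rw [Fintype.sum_prod_type]
    refine Finset.sum_congr rfl fun x _ => ?_
    rw [Fintype.sum_prod_type]
    refine Finset.sum_congr rfl fun w _ => ?_
    show (∑ y : ZMod p,
        if y ^ 2 = -(x ^ 2 - 4) * (x - w) * (w - a) * (w - b) * (w - c) then (1 : ZMod p)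
        else 0) = _
    rw [aux_count p hp2, hp2m]
  rw [hcount]
  have hsplit : (∑ x : ZMod p, ∑ w : ZMod p,
      (1 + (-(x ^ 2 - 4) * (x - w) * (w - a) * (w - b) * (w - c)) ^ m))
      = ∑ x : ZMod p, ∑ w : ZMod p,
          (-(x ^ 2 - 4) * (x - w) * (w - a) * (w - b) * (w - c)) ^ m := by
    simp only [Finset.sum_add_distrib, Finset.sum_const, Finset.card_univ, ZMod.card,
      nsmul_eq_mul, mul_one, ZMod.natCast_self, zero_add]
  rw [hsplit]
  have halg : ∀ x w : ZMod p, (-(x ^ 2 - 4) * (x - w) * (w - a) * (w - b) * (w - c)) ^ m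
      = (-1) ^ m * (((x-2)^m * (x+2)^m) * ((x-w)^m * ((w-a)^m * ((w-b)^m * (w-c)^m)))) := by
    intro x w
    rw [show (-(x ^ 2 - 4) * (x - w) * (w - a) * (w - b) * (w - c) : ZMod p)
        = (-1) * ((x-2) * ((x+2) * ((x-w) * ((w-a) * ((w-b) * (w-c)))))) from by ring]
    rw [mul_pow, mul_pow, mul_pow, mul_pow, mul_pow, mul_pow]
    ring
  have hpull : (∑ x : ZMod p, ∑ w : ZMod p,
      (-(x ^ 2 - 4) * (x - w) * (w - a) * (w - b) * (w - c)) ^ m)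
      = (-1) ^ m * ∑ x : ZMod p, ∑ w : ZMod p,
          ((x-2)^m * (x+2)^m) * ((x-w)^m * ((w-a)^m * ((w-b)^m * (w-c)^m))) := by
    rw [Finset.mul_sum]
    refine Finset.sum_congr rfl fun x _ => ?_
    rw [Finset.mul_sum]
    exact Finset.sum_congr rfl fun w _ => halg x w
  rw [hpull, aux_main p m hm1 hm2 a b c]
  simp only [hm2]
  have hsq1 : ((-1 : ZMod p)) ^ m * (-1) ^ m = 1 := by
    rw [← pow_add]
    exact Even.neg_one_pow ⟨m, rfl⟩
  rw [mul_add, hsq1]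
  congr 1
  congr 1
  exact Finset.sum_congr rfl fun l hl =>
    aux_final p m hm1 a b c l (Nat.lt_succ_iff.mp (mem_range.mp hl))
end

section
/- Let p be an odd prime and let w ∈ ZMod p. Then, as elements of ZMod p, Σ_{x ∈ ZMod p} ((x+2)(x−2)(x−w))^{(p−1)/2} = − Σ_{ℓ=0}^{(p−1)/2} ( Σ_{s+t+ℓ = p−1, 0 ≤ s,t ≤ (p−1)/2} C((p−1)/2, s)·C((p−1)/2, t)·C((p−1)/2, ℓ)·2^ℓ·(−1)^s ) · w^{(p−1)/2−ℓ}, where C(n, k) denotes the binomial coefficient. -/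
open Finset

lemma sum_pow_field (K : Type*) [Field K] [Fintype K] [DecidableEq K] (i : ℕ) (hi : i ≠ 0) :
    ∑ x : K, x ^ i = if Fintype.card K - 1 ∣ i then -1 else 0 := by
  classical
  let φ : Kˣ ↪ K := ⟨fun x ↦ x, fun _ _ h => Units.ext h⟩
  have hmap : univ.map φ = univ \ {0} := by
    ext x
    simp only [mem_map, mem_univ, true_and, mem_sdiff,
      mem_singleton]
    exact isUnit_iff_ne_zero
  have h1 : ∑ x : K, x ^ i = ∑ x ∈ univ \ {0}, x ^ i := by
    rw [sum_sdiff_eq_sub (subset_univ _), sum_singleton, zero_pow hi, sub_zero]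
  rw [h1, ← hmap, sum_map]
  exact FiniteField.sum_pow_units K i

/-- Evaluation of the fiberwise character sum in the point-count of the
twisted Legendre pencil. -/
theorem fiberwise_character_sum (p : ℕ) [Fact p.Prime] (hp : Odd p) (w : ZMod p) :
    ∑ x : ZMod p, ((x + 2) * (x - 2) * (x - w)) ^ ((p - 1) / 2) =
      -∑ ℓ ∈ Finset.range ((p - 1) / 2 + 1),
        (∑ s ∈ Finset.range ((p - 1) / 2 + 1), ∑ t ∈ Finset.range ((p - 1) / 2 + 1),
          if s + t + ℓ = p - 1 then
            (((p - 1) / 2).choose s : ZMod p) * (((p - 1) / 2).choose t : ZMod p) *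
            (((p - 1) / 2).choose ℓ : ZMod p) * (2 : ZMod p) ^ ℓ * (-1 : ZMod p) ^ s
          else 0) * w ^ ((p - 1) / 2 - ℓ) := by
  classical
  have hprime : p.Prime := Fact.out
  have hp2 : p ≠ 2 := by rintro rfl; revert hp; decide
  have hple : 2 ≤ p := hprime.two_le
  obtain ⟨kk, hkk⟩ := hp
  set m := (p - 1) / 2 with hm
  have h2m : 2 * m = p - 1 := by omega
  have hm1 : 1 ≤ m := by omega
  -- sum of powers over the field
  have hsum : ∀ n : ℕ, n ≤ 3 * m → (∑ x : ZMod p, x ^ n) = if n = p - 1 then (-1 : ZMod p) else 0 := by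
    intro n hn
    rcases eq_or_ne n 0 with rfl | h0
    · rw [if_neg (by omega)]
      simp only [pow_zero, Finset.sum_const, Finset.card_univ, ZMod.card, nsmul_eq_mul, mul_one]
      exact ZMod.natCast_self p
    · rw [sum_pow_field (ZMod p) n h0, ZMod.card]
      rcases eq_or_ne n (p - 1) with rfl | h1
      · rw [if_pos dvd_rfl, if_pos rfl]
      · rw [if_neg h1, if_neg]
        rintro ⟨k, hk⟩
        have hk0 : k ≠ 0 := by rintro rfl; omega
        have hk1 : k ≠ 1 := by rintro rfl; omega
        have h2 : (p - 1) * 2 ≤ (p - 1) * k := Nat.mul_le_mul_left _ (by omega)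
        rw [← hk] at h2
        omega
  -- binomial expansion of each summand
  have expand : ∀ x : ZMod p, ((x + 2) * (x - 2) * (x - w)) ^ m =
      ∑ a ∈ range (m + 1), ∑ b ∈ range (m + 1), ∑ c ∈ range (m + 1),
        x ^ (a + b + c) *
          (2 ^ (m - a) * (m.choose a : ZMod p) *
            ((-2 : ZMod p) ^ (m - b) * (m.choose b : ZMod p) *
              ((-w) ^ (m - c) * (m.choose c : ZMod p)))) := by
    intro x
    rw [show (x + 2) * (x - 2) * (x - w) = (x + 2) * ((x + -2) * (x + -w)) by ring,
      mul_pow, mul_pow, add_pow, add_pow, add_pow]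
    simp_rw [Finset.sum_mul, Finset.mul_sum]
    exact Finset.sum_congr rfl fun a _ => Finset.sum_congr rfl fun b _ =>
      Finset.sum_congr rfl fun c _ => by ring
  -- reorder a triple sum
  have reorder : ∀ f : ℕ → ℕ → ℕ → ZMod p,
      (∑ a ∈ range (m + 1), ∑ b ∈ range (m + 1), ∑ c ∈ range (m + 1), f a b c)
        = ∑ c ∈ range (m + 1), ∑ a ∈ range (m + 1), ∑ b ∈ range (m + 1), f a b c := by
    intro f
    rw [show (∑ a ∈ range (m + 1), ∑ b ∈ range (m + 1), ∑ c ∈ range (m + 1), f a b c)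
        = ∑ a ∈ range (m + 1), ∑ c ∈ range (m + 1), ∑ b ∈ range (m + 1), f a b c from
      Finset.sum_congr rfl fun a _ => Finset.sum_comm]
    exact Finset.sum_comm
  calc ∑ x : ZMod p, ((x + 2) * (x - 2) * (x - w)) ^ m
      = ∑ a ∈ range (m + 1), ∑ b ∈ range (m + 1), ∑ c ∈ range (m + 1),
          (∑ x : ZMod p, x ^ (a + b + c)) *
            (2 ^ (m - a) * (m.choose a : ZMod p) *
              ((-2 : ZMod p) ^ (m - b) * (m.choose b : ZMod p) *
                ((-w) ^ (m - c) * (m.choose c : ZMod p)))) := by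
        simp_rw [expand]
        rw [Finset.sum_comm]
        refine Finset.sum_congr rfl fun a _ => ?_
        rw [Finset.sum_comm]
        refine Finset.sum_congr rfl fun b _ => ?_
        rw [Finset.sum_comm]
        refine Finset.sum_congr rfl fun c _ => ?_
        rw [Finset.sum_mul]
    _ = ∑ a ∈ range (m + 1), ∑ b ∈ range (m + 1), ∑ c ∈ range (m + 1),
          (if a + b + c = p - 1 then
            -(2 ^ (m - a) * (m.choose a : ZMod p) *
              ((-2 : ZMod p) ^ (m - b) * (m.choose b : ZMod p) *
                ((-w) ^ (m - c) * (m.choose c : ZMod p)))) else 0) := by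
        refine Finset.sum_congr rfl fun a ha => Finset.sum_congr rfl fun b hb =>
          Finset.sum_congr rfl fun c hc => ?_
        simp only [mem_range] at ha hb hc
        rw [hsum (a + b + c) (by omega), ite_mul, zero_mul, neg_one_mul]
    _ = ∑ c ∈ range (m + 1), ∑ a ∈ range (m + 1), ∑ b ∈ range (m + 1),
          (if a + b + c = p - 1 then
            -(2 ^ (m - a) * (m.choose a : ZMod p) *
              ((-2 : ZMod p) ^ (m - b) * (m.choose b : ZMod p) *
                ((-w) ^ (m - c) * (m.choose c : ZMod p)))) else 0) := reorder _
    _ = -∑ ℓ ∈ Finset.range (m + 1),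
        (∑ s ∈ Finset.range (m + 1), ∑ t ∈ Finset.range (m + 1),
          if s + t + ℓ = p - 1 then
            (m.choose s : ZMod p) * (m.choose t : ZMod p) *
            (m.choose ℓ : ZMod p) * (2 : ZMod p) ^ ℓ * (-1 : ZMod p) ^ s
          else 0) * w ^ (m - ℓ) := by
        rw [← Finset.sum_neg_distrib]
        refine Finset.sum_congr rfl fun l hl => ?_
        rw [Finset.sum_mul, ← Finset.sum_neg_distrib]
        refine Finset.sum_congr rfl fun s hs => ?_
        rw [Finset.sum_mul, ← Finset.sum_neg_distrib]
        refine Finset.sum_congr rfl fun t ht => ?_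
        simp only [mem_range] at hl hs ht
        rw [ite_mul, zero_mul]
        rw [show -(if s + t + l = p - 1 then
              (m.choose s : ZMod p) * (m.choose t : ZMod p) * (m.choose l : ZMod p) *
                (2 : ZMod p) ^ l * (-1 : ZMod p) ^ s * w ^ (m - l) else 0)
            = (if s + t + l = p - 1 then
              -((m.choose s : ZMod p) * (m.choose t : ZMod p) * (m.choose l : ZMod p) *
                (2 : ZMod p) ^ l * (-1 : ZMod p) ^ s * w ^ (m - l)) else -0) from
          apply_ite Neg.neg _ _ _]
        rw [neg_zero]
        split_ifs with h
        · have e1 : (m - s) + (m - t) = l := by omega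
          have e2 : (m - t) + (m - l) = s := by omega
          rw [show ((-2 : ZMod p)) ^ (m - t) = (-1 : ZMod p) ^ (m - t) * 2 ^ (m - t) by
              rw [← neg_one_mul, mul_pow],
            show ((-w : ZMod p)) ^ (m - l) = (-1 : ZMod p) ^ (m - l) * w ^ (m - l) by
              rw [← neg_one_mul, mul_pow],
            show (2 : ZMod p) ^ l = 2 ^ (m - s) * 2 ^ (m - t) by rw [← pow_add, e1],
            show (-1 : ZMod p) ^ s = (-1 : ZMod p) ^ (m - t) * (-1 : ZMod p) ^ (m - l) by
              rw [← pow_add, e2]]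
          ring
        · rfl
end

section
/- Let p be an odd prime, let a, b, c ∈ ZMod p, and let ℓ₁ be an integer with 0 ≤ ℓ₁ < (p−1)/2. Then, as elements of ZMod p, Σ_{w ∈ ZMod p} w^{ℓ₁}·((w−a)(w−b)(w−c))^{(p−1)/2} = − (−1)^{(p−1)/2 − ℓ₁} · Σ_{i+j+k = ℓ₁ + (p−1)/2, 0 ≤ i,j,k ≤ (p−1)/2} C((p−1)/2, i)·C((p−1)/2, j)·C((p−1)/2, k)·aⁱ·bʲ·cᵏ, where C(n, k) denotes the binomial coefficient. -/
open Finset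

lemma sum_pow_zmod (p : ℕ) [Fact p.Prime] (n : ℕ) :
    ∑ w : ZMod p, w ^ n = if n ≠ 0 ∧ (p - 1) ∣ n then -1 else 0 := by
  by_cases hn : n = 0
  · simp [hn, Finset.card_univ, ZMod.natCast_self p]
  · classical
    let φ : (ZMod p)ˣ ↪ ZMod p := ⟨fun x ↦ x, Units.val_injective⟩
    have hM : univ.map φ = univ \ {0} := by
      ext x
      simpa only [mem_map, mem_univ, Function.Embedding.coeFn_mk, true_and, mem_sdiff,
        mem_singleton, φ] using
        (by exact isUnit_iff_ne_zero : (∃ u : (ZMod p)ˣ, (u : ZMod p) = x) ↔ ¬x = 0)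
    have h1 : ∑ w : ZMod p, w ^ n = ∑ x : (ZMod p)ˣ, ((x : ZMod p)) ^ n := by
      calc ∑ w : ZMod p, w ^ n = ∑ w ∈ univ \ {(0 : ZMod p)}, w ^ n := by
            rw [← sum_sdiff ({0} : Finset (ZMod p)).subset_univ, sum_singleton, zero_pow hn,
              add_zero]
        _ = _ := by simp [φ, ← hM, univ.sum_map φ]
    rw [h1]
    have h2 := FiniteField.sum_pow_units (ZMod p) n
    rw [ZMod.card] at h2
    simpa [hn] using h2

lemma triple_reverse {M : Type*} [AddCommMonoid M] (s : Finset ℕ) (F : ℕ → ℕ → ℕ → M) :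
    ∑ i ∈ s, ∑ j ∈ s, ∑ k ∈ s, F k j i = ∑ i ∈ s, ∑ j ∈ s, ∑ k ∈ s, F i j k := by
  calc ∑ i ∈ s, ∑ j ∈ s, ∑ k ∈ s, F k j i
      = ∑ j ∈ s, ∑ i ∈ s, ∑ k ∈ s, F k j i := Finset.sum_comm
    _ = ∑ j ∈ s, ∑ k ∈ s, ∑ i ∈ s, F k j i := Finset.sum_congr rfl fun j _ => Finset.sum_comm
    _ = ∑ k ∈ s, ∑ j ∈ s, ∑ i ∈ s, F k j i := Finset.sum_comm

/-- Evaluation of the base character sum in the point-count of the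
twisted Legendre pencil. -/
theorem base_character_sum (p : ℕ) [Fact p.Prime] (hp : Odd p) (a b c : ZMod p)
    (ℓ₁ : ℕ) (hℓ₁ : ℓ₁ < (p - 1) / 2) :
    ∑ w : ZMod p, w ^ ℓ₁ * ((w - a) * (w - b) * (w - c)) ^ ((p - 1) / 2) =
      -((-1 : ZMod p) ^ ((p - 1) / 2 - ℓ₁) *
        ∑ i ∈ Finset.range ((p - 1) / 2 + 1), ∑ j ∈ Finset.range ((p - 1) / 2 + 1),
          ∑ k ∈ Finset.range ((p - 1) / 2 + 1),
            if i + j + k = ℓ₁ + (p - 1) / 2 then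
              (((p - 1) / 2).choose i : ZMod p) * (((p - 1) / 2).choose j : ZMod p) *
              (((p - 1) / 2).choose k : ZMod p) * a ^ i * b ^ j * c ^ k
            else 0) := by
  classical
  obtain ⟨t, ht⟩ := hp
  have hp2 : 2 ≤ p := (Fact.out : p.Prime).two_le
  set m := (p - 1) / 2 with hm
  have hmt : m = t := by omega
  have h2m : p - 1 = 2 * m := by omega
  have hm1 : 1 ≤ m := by omega
  have expand : ∀ w : ZMod p, w ^ ℓ₁ * ((w - a) * (w - b) * (w - c)) ^ m =
      ∑ i ∈ range (m + 1), ∑ j ∈ range (m + 1), ∑ k ∈ range (m + 1),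
        ((-a) ^ k * (-b) ^ j * (-c) ^ i * (m.choose k : ZMod p) * (m.choose j : ZMod p) *
          (m.choose i : ZMod p) * w ^ (ℓ₁ + (m - i) + (m - j) + (m - k))) := by
    intro w
    rw [mul_pow, mul_pow, sub_eq_neg_add w a, sub_eq_neg_add w b, sub_eq_neg_add w c,
      add_pow, add_pow, add_pow]
    simp only [Finset.sum_mul, Finset.mul_sum]
    refine Finset.sum_congr rfl fun i hi => Finset.sum_congr rfl fun j hj =>
      Finset.sum_congr rfl fun k hk => ?_
    rw [pow_add, pow_add, pow_add]
    ring
  calc ∑ w : ZMod p, w ^ ℓ₁ * ((w - a) * (w - b) * (w - c)) ^ m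
      = ∑ w : ZMod p, ∑ i ∈ range (m + 1), ∑ j ∈ range (m + 1), ∑ k ∈ range (m + 1),
        ((-a) ^ k * (-b) ^ j * (-c) ^ i * (m.choose k : ZMod p) * (m.choose j : ZMod p) *
          (m.choose i : ZMod p) * w ^ (ℓ₁ + (m - i) + (m - j) + (m - k))) :=
        Finset.sum_congr rfl fun w _ => expand w
    _ = ∑ i ∈ range (m + 1), ∑ j ∈ range (m + 1), ∑ k ∈ range (m + 1), ∑ w : ZMod p,
        ((-a) ^ k * (-b) ^ j * (-c) ^ i * (m.choose k : ZMod p) * (m.choose j : ZMod p) *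
          (m.choose i : ZMod p) * w ^ (ℓ₁ + (m - i) + (m - j) + (m - k))) := by
        rw [Finset.sum_comm]
        refine Finset.sum_congr rfl fun i _ => ?_
        rw [Finset.sum_comm]
        refine Finset.sum_congr rfl fun j _ => ?_
        rw [Finset.sum_comm]
    _ = ∑ i ∈ range (m + 1), ∑ j ∈ range (m + 1), ∑ k ∈ range (m + 1),
        -((-1 : ZMod p) ^ (m - ℓ₁) *
          if k + j + i = ℓ₁ + m then
            (m.choose k : ZMod p) * (m.choose j : ZMod p) * (m.choose i : ZMod p) *
              a ^ k * b ^ j * c ^ i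
          else 0) := by
        refine Finset.sum_congr rfl fun i hi => Finset.sum_congr rfl fun j hj =>
          Finset.sum_congr rfl fun k hk => ?_
        rw [mem_range] at hi hj hk
        rw [← Finset.mul_sum, sum_pow_zmod]
        by_cases h : k + j + i = ℓ₁ + m
        · have hn : ℓ₁ + (m - i) + (m - j) + (m - k) = 2 * m := by omega
          rw [if_pos ⟨by omega, by rw [hn, h2m]⟩, if_pos h]
          have hsign : ((-1 : ZMod p)) ^ k * (-1) ^ j * (-1) ^ i = (-1) ^ (m - ℓ₁) := by
            rw [← pow_add, ← pow_add, h]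
            have h2 : ℓ₁ + m = (m - ℓ₁) + 2 * ℓ₁ := by omega
            rw [h2, pow_add, pow_mul, neg_one_sq, one_pow, mul_one]
          linear_combination (-(a ^ k * b ^ j * c ^ i * (m.choose i : ZMod p) *
            (m.choose j : ZMod p) * (m.choose k : ZMod p))) * hsign
        · have hcond : ¬(ℓ₁ + (m - i) + (m - j) + (m - k) ≠ 0 ∧
              (p - 1) ∣ (ℓ₁ + (m - i) + (m - j) + (m - k))) := by
            rintro ⟨hne, d, hd⟩
            rw [h2m] at hd
            rcases d with _ | _ | d
            · rw [Nat.mul_zero] at hd; omega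
            · rw [Nat.mul_one] at hd; omega
            · have h4 : 4 * m ≤ 2 * m * (d + 2) := by
                calc 4 * m = 2 * m * 2 := by ring
                  _ ≤ 2 * m * (d + 2) := Nat.mul_le_mul_left _ (by omega)
              rw [← hd] at h4
              omega
          rw [if_neg hcond, mul_zero, if_neg h, mul_zero, neg_zero]
    _ = ∑ i ∈ range (m + 1), ∑ j ∈ range (m + 1), ∑ k ∈ range (m + 1),
        -((-1 : ZMod p) ^ (m - ℓ₁) *
          if i + j + k = ℓ₁ + m then
            (m.choose i : ZMod p) * (m.choose j : ZMod p) * (m.choose k : ZMod p) *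
              a ^ i * b ^ j * c ^ k
          else 0) :=
        triple_reverse (range (m + 1)) (fun x y z =>
          -((-1 : ZMod p) ^ (m - ℓ₁) *
            if x + y + z = ℓ₁ + m then
              (m.choose x : ZMod p) * (m.choose y : ZMod p) * (m.choose z : ZMod p) *
                a ^ x * b ^ y * c ^ z
            else 0))
    _ = -((-1 : ZMod p) ^ (m - ℓ₁) *
        ∑ i ∈ range (m + 1), ∑ j ∈ range (m + 1), ∑ k ∈ range (m + 1),
          if i + j + k = ℓ₁ + m then
            (m.choose i : ZMod p) * (m.choose j : ZMod p) * (m.choose k : ZMod p) *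
              a ^ i * b ^ j * c ^ k
          else 0) := by
        simp [Finset.mul_sum]
end
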